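/- arXiv:1710.06627 — 4 statements merged into one kernel-verified Lean document; each statement's English description precedes it below -/
import Mathlib

section
/- Let k be a field, let N be a positive integer, and let h : ℤ × ℤ → kˣ be a family of nonzero elements of k. Define λ_{a,b} := ∏_{j=b}^{b+N-1} h_{a,j} for a, b ∈ ℤ. Then there exists a family c : ℤ × ℤ → kˣ satisfying (i) ∏_{j=a}^{a+N-1} c_{j,b} = h_{a,b} for all a, b ∈ ℤ, (ii) c_{a,a} = 1 for all a ∈ ℤ, and (iii) c_{a,b} · c_{b,a} = 1 for all a, b ∈ ℤ, if and only if λ_{a,a} = 1 for all a ∈ ℤ and λ_{a,b} · λ_{b,a} = 1 for all a, b ∈ ℤ. -/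
open Finset
section
variable {A : Type*} [AddCommGroup A]

lemma sum_Icc_top (f : ℤ → A) {p q : ℤ} (hpq : p ≤ q) :
    ∑ t ∈ Icc p q, f t = (∑ t ∈ Icc p (q-1), f t) + f q := by
  have h1 : Icc p q = insert q (Icc p (q-1)) := by
    ext x; simp only [mem_Icc, mem_insert]; omega
  have h2 : q ∉ Icc p (q-1) := by simp only [mem_Icc]; omega
  rw [h1, Finset.sum_insert h2, add_comm]

lemma sum_Icc_bot (f : ℤ → A) {p q : ℤ} (hpq : p ≤ q) :
    ∑ t ∈ Icc p q, f t = f p + ∑ t ∈ Icc (p+1) q, f t := by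
  have h1 : Icc p q = insert p (Icc (p+1) q) := by
    ext x; simp only [mem_Icc, mem_insert]; omega
  have h2 : p ∉ Icc (p+1) q := by simp only [mem_Icc]; omega
  rw [h1, Finset.sum_insert h2]

lemma sum_Icc_shift (f : ℤ → A) (p q c : ℤ) :
    ∑ t ∈ Icc (p+c) (q+c), f t = ∑ t ∈ Icc p q, f (t+c) := by
  rw [← Finset.map_add_right_Icc, Finset.sum_map]
  rfl

lemma sum_Icc_split (f : ℤ → A) {p m q : ℤ} (h1 : p ≤ m+1) (h2 : m ≤ q) :
    ∑ t ∈ Icc p q, f t = (∑ t ∈ Icc p m, f t) + ∑ t ∈ Icc (m+1) q, f t := by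
  rw [← Finset.sum_union]
  · congr 1
    ext x; simp only [mem_Icc, mem_union]; omega
  · rw [Finset.disjoint_left]
    intro x hx hx'
    simp only [mem_Icc] at hx hx'; omega

lemma tel_nat (g : ℤ → A) (p : ℤ) : ∀ k : ℕ,
    ∑ t ∈ Icc p (p + k - 1), (g (t+1) - g t) = g (p + k) - g p := by
  intro k
  induction k with
  | zero =>
    rw [Finset.Icc_eq_empty (by omega), Finset.sum_empty]
    norm_num
  | succ k ih =>
    have e1 : (p + (k+1:ℕ) - 1 : ℤ) = p + k := by push_cast; ring
    rw [e1, sum_Icc_top _ (by omega : p ≤ p + (k:ℤ)), ih]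
    have e2 : (p + ((k:ℤ)+1)) = p + ((k+1:ℕ):ℤ) := by push_cast; ring
    rw [show (p + (k:ℤ) + 1) = p + ((k+1:ℕ):ℤ) by push_cast; ring]
    abel

lemma tel (g : ℤ → A) (p q : ℤ) (hq : p ≤ q) :
    ∑ t ∈ Icc p (q-1), (g (t+1) - g t) = g q - g p := by
  obtain ⟨k, rfl⟩ : ∃ k : ℕ, q = p + k := ⟨(q - p).toNat, by omega⟩
  have := tel_nat g p k
  rw [show p + (k:ℤ) - 1 = p + k - 1 by ring] at this
  exact this

variable {A : Type*} [AddCommGroup A]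

noncomputable def zsum (f : ℤ → A) (q : ℤ) : A := (∑ m ∈ Icc 1 q, f m) - ∑ m ∈ Icc (q+1) 0, f m

lemma zsum_zero (f : ℤ → A) : zsum f 0 = 0 := by
  unfold zsum
  rw [Finset.Icc_eq_empty (by omega), Finset.Icc_eq_empty (by omega)]
  simp

lemma zsum_succ (f : ℤ → A) (q : ℤ) : zsum f (q+1) = zsum f q + f (q+1) := by
  unfold zsum
  rcases le_or_gt 0 q with hq | hq
  · rw [Finset.Icc_eq_empty (show ¬ (q+1 ≤ 0) by omega),
      Finset.Icc_eq_empty (show ¬ (q+1+1 ≤ 0) by omega),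
      sum_Icc_top f (by omega : (1:ℤ) ≤ q + 1)]
    rw [show q + 1 - 1 = q by ring]
    simp
  · rw [Finset.Icc_eq_empty (show ¬ (1 ≤ q+1) by omega),
      Finset.Icc_eq_empty (show ¬ (1 ≤ q) by omega),
      sum_Icc_bot f (by omega : q + 1 ≤ 0)]
    simp

lemma int_ind (n : ℤ) (hn : 0 < n) (P : ℤ → Prop)
    (base : ∀ r, 0 ≤ r → r < n → P r)
    (up : ∀ b, P b → P (b+n)) (down : ∀ b, P (b+n) → P b) : ∀ b, P b := by
  have key : ∀ (q : ℤ) (r : ℤ), 0 ≤ r → r < n → P (n*q + r) := by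
    intro q
    induction q using Int.induction_on with
    | zero => intro r h1 h2; simpa using base r h1 h2
    | succ i ih =>
      intro r h1 h2
      have := up _ (ih r h1 h2)
      rw [show n*(i:ℤ) + r + n = n*((i:ℤ)+1) + r by ring] at this
      exact this
    | pred i ih =>
      intro r h1 h2
      apply down
      have := ih r h1 h2
      rw [show n*(-(i:ℤ)-1) + r + n = n*(-(i:ℤ)) + r by ring]
      exact this
  intro b
  have h1 := Int.mul_ediv_add_emod b n
  have h2 := Int.emod_nonneg b (by omega : n ≠ 0)
  have h3 := Int.emod_lt_of_pos b hn
  have := key (b / n) (b % n) h2 h3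
  rwa [h1] at this
variable (n : ℤ) (h : ℤ → ℤ → A)

noncomputable def lam (x y : ℤ) : A := ∑ j ∈ Icc y (y+n-1), h x j
def rho (b s : ℤ) : A := h (b+s-n+1) b - h (b+s-n) b
noncomputable def B0 (b s : ℤ) : A := if s = 1 then ∑ j ∈ Icc 0 b, h 0 j else 0
noncomputable def W (b s : ℤ) : A := if b + s ≤ n - 1 then B0 h b s else rho n h b s - B0 h (b+s-n) (n-s)
def Del (b s : ℤ) : A := rho n h b s - rho n h (b+s-n) (n-s)
noncomputable def beta (b s : ℤ) : A := W n h (b % n) s + zsum (fun m => Del n h (m*n + b % n) s) (b / n)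
noncomputable def ee (x y : ℤ) : A := if x ≤ y then 0 else
  (if (x - y) % n = 0 then 0 else beta n h y ((x-y) % n))
  + ∑ m ∈ Icc 0 ((x-y)/n - 1), (h (y + (x-y) % n + m*n + 1) y - h (y + (x-y) % n + m*n) y)

variable {n}

lemma beta_step (hn : 0 < n) (b s : ℤ) :
    beta n h (b+n) s = beta n h b s + Del n h (b+n) s := by
  unfold beta
  have h1 : (b+n) % n = b % n := by
    rw [show b + n = b + 1*n by ring, Int.add_mul_emod_self_right]
  have h2 : (b+n) / n = b / n + 1 := by
    rw [show b + n = b + 1*n by ring, Int.add_mul_ediv_right _ _ (by omega : n ≠ 0)]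
  rw [h1, h2, zsum_succ]
  have h3 : (b / n + 1) * n + b % n = b + n := by
    have := Int.mul_ediv_add_emod b n
    linear_combination this
  rw [h3]
  abel

lemma beta_base (hb0 : 0 ≤ b) (hbn : b < n) (s : ℤ) : beta n h b s = W n h b s := by
  unfold beta
  rw [Int.emod_eq_of_lt hb0 hbn, Int.ediv_eq_zero_of_lt hb0 hbn, zsum_zero, add_zero]

lemma band (hn : 0 < n) : ∀ b s : ℤ, 1 ≤ s → s ≤ n - 1 →
    beta n h b s + beta n h (b+s-n) (n-s) = rho n h b s := by
  have key : ∀ b : ℤ, ∀ s : ℤ, 1 ≤ s → s ≤ n - 1 →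
      beta n h b s + beta n h (b+s-n) (n-s) = rho n h b s := by
    apply int_ind n hn (fun b => ∀ s : ℤ, 1 ≤ s → s ≤ n - 1 →
      beta n h b s + beta n h (b+s-n) (n-s) = rho n h b s)
    · -- base
      intro b hb0 hbn s hs1 hs2
      rw [beta_base h hb0 hbn]
      rcases le_or_gt (b + s) (n-1) with hbs | hbs
      · -- partner in [-n,-1]
        have e1 : beta n h (b+s-n) (n-s) = W n h (b+s) (n-s) - Del n h (b+s) (n-s) := by
          have h1 := beta_step h hn (b+s-n) (n-s)
          rw [show b+s-n+n = b+s by ring] at h1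
          have h2 : beta n h (b+s) (n-s) = W n h (b+s) (n-s) :=
            beta_base h (by omega) (by omega) _
          rw [h2] at h1
          linear_combination (norm := abel1) h1.symm
        rw [e1]
        rw [show W n h b s = B0 h b s from if_pos (by omega)]
        unfold W
        rw [if_neg (by omega : ¬ (b+s) + (n-s) ≤ n - 1)]
        unfold Del
        rw [show (b+s) + (n-s) - n = b by ring, show n - (n-s) = s by ring]
        abel
      · -- partner in [0, n-2]
        have e1 : beta n h (b+s-n) (n-s) = W n h (b+s-n) (n-s) :=
          beta_base h (by omega) (by omega) _
        rw [e1]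
        unfold W
        rw [if_neg (by omega : ¬ b + s ≤ n - 1)]
        rw [if_pos (by omega : (b+s-n) + (n-s) ≤ n - 1)]
        abel
    · -- up
      intro b ih s hs1 hs2
      have h1 := beta_step h hn b s
      have h2 := beta_step h hn (b+s-n) (n-s)
      have h3 := ih s hs1 hs2
      have d1 : Del n h (b+n) s = rho n h (b+n) s - rho n h (b+s) (n-s) := by
        unfold Del; rw [show (b+n)+s-n = b+s by ring]
      have d2 : Del n h (b+s-n+n) (n-s) = rho n h (b+s) (n-s) - rho n h b s := by
        unfold Del
        rw [show (b+s-n+n)+(n-s)-n = b by ring, show n-(n-s) = s by ring,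
          show b+s-n+n = b+s by ring]
      rw [show b+n+s-n = b+s-n+n by ring, h1, h2, d1, d2]
      linear_combination (norm := abel1) h3
    · -- down
      intro b ih s hs1 hs2
      have h1 := beta_step h hn b s
      have h2 := beta_step h hn (b+s-n) (n-s)
      have h3 := ih s hs1 hs2
      have d1 : Del n h (b+n) s = rho n h (b+n) s - rho n h (b+s) (n-s) := by
        unfold Del; rw [show (b+n)+s-n = b+s by ring]
      have d2 : Del n h (b+s-n+n) (n-s) = rho n h (b+s) (n-s) - rho n h b s := by
        unfold Del
        rw [show (b+s-n+n)+(n-s)-n = b by ring, show n-(n-s) = s by ring,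
          show b+s-n+n = b+s by ring]
      rw [show b+n+s-n = b+s-n+n by ring, h1, h2, d1, d2] at h3
      linear_combination (norm := abel1) h3
  exact key

lemma lam_succ' (hn : 0 < n) (x y : ℤ) :
    lam n h x (y+1) = lam n h x y + h x (y+n) - h x y := by
  have h1 : lam n h x (y+1) = (∑ j ∈ Icc (y+1) (y+n-1), h x j) + h x (y+n) := by
    unfold lam
    rw [show y+1+n-1 = y+n by ring, sum_Icc_top _ (by omega : y+1 ≤ y+n),
      show y+n-1 = y+n-1 by ring]
  have h2 : lam n h x y = h x y + ∑ j ∈ Icc (y+1) (y+n-1), h x j := by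
    unfold lam
    exact sum_Icc_bot _ (by omega)
  linear_combination (norm := abel1) h1 - h2

lemma hkey' (hn : 0 < n) (x y z : ℤ) (hz : z = y + n) :
    h x z = lam n h x (y+1) - lam n h x y + h x y := by
  subst hz
  linear_combination (norm := abel1) -lam_succ' h hn x y

lemma lanti (H2 : ∀ a b, lam n h a b + lam n h b a = 0) (x y : ℤ) :
    lam n h y x = - lam n h x y := by
  linear_combination (norm := abel1) H2 x y

lemma DelSum (hn : 0 < n) (H1 : ∀ a, lam n h a a = 0) (b : ℤ) :
    ∑ s ∈ Icc 1 (n-1), Del n h b s = h b b - h (b-n) (b-n) := by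
  -- Part A
  have hA : ∑ s ∈ Icc 1 (n-1), rho n h b s = h (b-n+n) b - h (b-n+1) b := by
    have t := tel (fun t => h (b-n+t) b) 1 n (by omega)
    rw [← t]
    apply Finset.sum_congr rfl
    intro s _
    show rho n h b s = h (b-n+(s+1)) b - h (b-n+s) b
    unfold rho
    rw [show b+s-n+1 = b-n+(s+1) by ring, show b+s-n = b-n+s by ring]
  -- Part B
  have hB : ∑ s ∈ Icc 1 (n-1), rho n h (b+s-n) (n-s)
      = (∑ j ∈ Icc (1+(b-n)) ((n-1)+(b-n)), h (b-n+1) j)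
        - ∑ j ∈ Icc (1+(b-n)) ((n-1)+(b-n)), h (b-n) j := by
    rw [← Finset.sum_sub_distrib,
      sum_Icc_shift (fun j => h (b-n+1) j - h (b-n) j) 1 (n-1) (b-n)]
    apply Finset.sum_congr rfl
    intro s _
    show rho n h (b+s-n) (n-s) = h (b-n+1) (s+(b-n)) - h (b-n) (s+(b-n))
    unfold rho
    rw [show (b+s-n)+(n-s)-n+1 = b-n+1 by ring, show (b+s-n)+(n-s)-n = b-n by ring,
      show b+s-n = s+(b-n) by ring]
  -- Part C
  have hC : ∀ x : ℤ, ∑ j ∈ Icc (1+(b-n)) ((n-1)+(b-n)), h x j = lam n h x (b-n+1) - h x b := by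
    intro x
    have h1 : lam n h x (b-n+1) = (∑ j ∈ Icc (b-n+1) (b-1), h x j) + h x b := by
      unfold lam
      rw [show b-n+1+n-1 = b by ring]
      have := sum_Icc_top (fun j => h x j) (by omega : b-n+1 ≤ b)
      rw [this, show b-1 = b-1 by ring]
    rw [show (1:ℤ)+(b-n) = b-n+1 by ring, show (n-1)+(b-n) = b-1 by ring]
    linear_combination (norm := abel1) h1.symm
  -- Part D
  have hD : lam n h (b-n) (b-n+1) = h (b-n) b - h (b-n) (b-n) := by
    have := lam_succ' h hn (b-n) (b-n)
    rw [H1 (b-n), show b-n+n = b by ring] at this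
    linear_combination (norm := abel1) this
  have hsub : ∑ s ∈ Icc 1 (n-1), Del n h b s
      = (∑ s ∈ Icc 1 (n-1), rho n h b s) - ∑ s ∈ Icc 1 (n-1), rho n h (b+s-n) (n-s) := by
    rw [← Finset.sum_sub_distrib]
    rfl
  rw [hsub, hA, hB, hC, hC, hD, H1 (b-n+1), show b-n+n = b by ring]
  abel

lemma anchor_base (hn : 0 < n) (H1 : ∀ a, lam n h a a = 0)
    {r : ℤ} (hr0 : 0 ≤ r) (hrn : r < n) :
    ∑ s ∈ Icc 1 (n-1), W n h r s = h r r := by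
  have hP : ∀ x : ℤ, 1 ≤ x → (∑ j ∈ Icc 0 x, h 0 j) = (∑ j ∈ Icc 0 (x-1), h 0 j) + h 0 x :=
    fun x hx => sum_Icc_top _ (by omega)
  rcases eq_or_lt_of_le (show (1:ℤ) ≤ n by omega) with hn1 | hn2
  · -- n = 1
    have hr : r = 0 := by omega
    have : lam n h 0 0 = h 0 0 := by
      unfold lam
      rw [show (0:ℤ)+n-1 = 0 by omega]
      simp
    rw [Finset.Icc_eq_empty (by omega), Finset.sum_empty, hr, ← this, H1 0]
  · -- n ≥ 2
    have hsplit : ∑ s ∈ Icc 1 (n-1), W n h r s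
        = (∑ s ∈ Icc 1 (n-1-r), W n h r s) + ∑ s ∈ Icc (n-1-r+1) (n-1), W n h r s :=
      sum_Icc_split _ (by omega) (by omega)
    have hS1 : ∀ s ∈ Icc 1 (n-1-r), W n h r s = B0 h r s := by
      intro s hs
      simp only [mem_Icc] at hs
      exact if_pos (by omega)
    have hS2 : ∀ s ∈ Icc (n-1-r+1) (n-1), W n h r s
        = rho n h r s - B0 h (r+s-n) (n-s) := by
      intro s hs
      simp only [mem_Icc] at hs
      exact if_neg (by omega)
    rw [hsplit, Finset.sum_congr rfl hS1, Finset.sum_congr rfl hS2,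
      Finset.sum_sub_distrib]
    have hrho : ∑ s ∈ Icc (n-1-r+1) (n-1), rho n h r s = h r r - h 0 r := by
      have t := tel (fun t => h (r+t-n) r) (n-r) n (by omega)
      rw [show r+n-n = r by ring, show r+(n-r)-n = 0 by ring] at t
      rw [show n-1-r+1 = n-r by ring, ← t]
      apply Finset.sum_congr rfl
      intro s _
      unfold rho
      rw [show r+s-n+1 = r+(s+1)-n by ring]
    rw [hrho]
    rcases eq_or_lt_of_le hr0 with hr00 | hr1
    · -- r = 0
      rw [← hr00]
      rw [Finset.Icc_eq_empty (show ¬ (n-1-0+1 ≤ n-1) by omega), Finset.sum_empty]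
      have : ∑ s ∈ Icc 1 (n-1-0), B0 h 0 s = h 0 0 := by
        rw [Finset.sum_eq_single 1]
        · unfold B0
          rw [if_pos rfl]
          simp
        · intro s _ hs1
          exact if_neg hs1
        · intro hmem
          exact absurd (by simp only [mem_Icc]; omega) hmem
      rw [this]
      abel
    · -- r ≥ 1
      have hB0sum : ∑ s ∈ Icc (n-1-r+1) (n-1), B0 h (r+s-n) (n-s)
          = ∑ j ∈ Icc 0 (r-1), h 0 j := by
        rw [Finset.sum_eq_single (n-1)]
        · unfold B0
          rw [if_pos (by ring), show r+(n-1)-n = r-1 by ring]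
        · intro s hs hs1
          simp only [mem_Icc] at hs
          exact if_neg (by omega)
        · intro hmem
          exact absurd (by simp only [mem_Icc]; omega) hmem
      rw [hB0sum]
      rcases lt_or_ge r (n-1) with hrn1 | hrn1
      · -- 1 ≤ r ≤ n-2
        have hB1 : ∑ s ∈ Icc 1 (n-1-r), B0 h r s = ∑ j ∈ Icc 0 r, h 0 j := by
          rw [Finset.sum_eq_single 1]
          · unfold B0; rw [if_pos rfl]
          · intro s _ hs1
            exact if_neg hs1
          · intro hmem
            exact absurd (by simp only [mem_Icc]; omega) hmem
        rw [hB1, hP r (by omega)]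
        abel
      · -- r = n-1
        have hr : r = n-1 := by omega
        rw [Finset.Icc_eq_empty (show ¬ (1 ≤ n-1-r) by omega), Finset.sum_empty]
        have hlam : lam n h 0 0 = (∑ j ∈ Icc 0 (r-1), h 0 j) + h 0 r := by
          unfold lam
          rw [show (0:ℤ)+n-1 = r by omega, sum_Icc_top _ (by omega : (0:ℤ) ≤ r)]
        rw [H1 0] at hlam
        linear_combination (norm := abel1) hlam

lemma anchor (hn : 0 < n) (H1 : ∀ a, lam n h a a = 0) :
    ∀ b : ℤ, ∑ s ∈ Icc 1 (n-1), beta n h b s = h b b := by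
  apply int_ind n hn
  · intro r h0 h1
    have : ∀ s ∈ Icc 1 (n-1), beta n h r s = W n h r s := fun s _ => beta_base h h0 h1 s
    rw [Finset.sum_congr rfl this]
    exact anchor_base h hn H1 h0 h1
  · intro b ih
    have hst : ∀ s ∈ Icc 1 (n-1), beta n h (b+n) s = beta n h b s + Del n h (b+n) s :=
      fun s _ => beta_step h hn b s
    rw [Finset.sum_congr rfl hst, Finset.sum_add_distrib, ih]
    have := DelSum h hn H1 (b+n)
    rw [show b+n-n = b by ring] at this
    rw [this]
    abel
  · intro b ih
    have hst : ∀ s ∈ Icc 1 (n-1), beta n h (b+n) s = beta n h b s + Del n h (b+n) s :=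
      fun s _ => beta_step h hn b s
    rw [Finset.sum_congr rfl hst, Finset.sum_add_distrib] at ih
    have hds := DelSum h hn H1 (b+n)
    rw [show b+n-n = b by ring] at hds
    rw [hds] at ih
    linear_combination (norm := abel1) ih

lemma ee_of_le {x y : ℤ} (hxy : x ≤ y) : ee n h x y = 0 := if_pos hxy

lemma ee_band (hn : 0 < n) {x y : ℤ} (h1 : y < x) (h2 : x < y + n) :
    ee n h x y = beta n h y (x - y) := by
  unfold ee
  rw [if_neg (by omega)]
  rw [Int.emod_eq_of_lt (by omega) (by omega), Int.ediv_eq_zero_of_lt (by omega) (by omega)]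
  rw [if_neg (by omega), Finset.Icc_eq_empty (by norm_num), Finset.sum_empty, add_zero]

lemma ee_step (hn : 0 < n) {x y : ℤ} (hxy : y ≤ x) :
    ee n h (x+n) y = ee n h x y + h (x+1) y - h x y := by
  rcases eq_or_lt_of_le hxy with hxy1 | hxy1
  · subst hxy1
    rw [ee_of_le h (le_refl y)]
    unfold ee
    rw [if_neg (show ¬ y + n ≤ y by omega)]
    rw [show y+n-y = n by ring, Int.emod_self, Int.ediv_self (by omega : n ≠ 0)]
    rw [if_pos rfl, show (1:ℤ)-1 = 0 by ring]
    rw [show Icc (0:ℤ) 0 = {0} from Finset.Icc_self 0, Finset.sum_singleton]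
    rw [show y+0+0*n+1 = y+1 by ring, show y+0+0*n = y by ring]
    abel
  · unfold ee
    rw [if_neg (show ¬ x + n ≤ y by omega), if_neg (show ¬ x ≤ y by omega)]
    have e1 : (x+n-y) = (x-y) + 1*n := by ring
    rw [e1, Int.add_mul_emod_self_right, Int.add_mul_ediv_right _ _ (by omega : n ≠ 0)]
    have hq0 : 0 ≤ (x-y)/n := Int.ediv_nonneg (by omega) (by omega)
    rw [show (x-y)/n + 1 - 1 = (x-y)/n by ring]
    rw [sum_Icc_top _ (by omega : (0:ℤ) ≤ (x-y)/n)]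
    rw [show y + (x-y) % n + ((x-y)/n)*n + 1 = x + 1 from by
      linear_combination Int.emod_add_mul_ediv (x-y) n]
    rw [show y + (x-y) % n + ((x-y)/n)*n = x from by
      linear_combination Int.emod_add_mul_ediv (x-y) n]
    abel

lemma ColD (hn : 0 < n) (H1 : ∀ a, lam n h a a = 0) :
    ∀ (k : ℕ) (y : ℤ), ∑ i ∈ Icc (y+k) (y+k+n-1), ee n h i y = h (y+k) y := by
  intro k
  induction k with
  | zero =>
    intro y
    push_cast
    rw [show y + (0:ℤ) = y by ring]
    rw [show (Icc y (y+n-1) : Finset ℤ) = Icc (0+y) ((n-1)+y) from by congr 1 <;> ring]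
    rw [sum_Icc_shift (fun t => ee n h t y) 0 (n-1) y]
    rw [sum_Icc_bot _ (by omega : (0:ℤ) ≤ n-1)]
    rw [show ee n h (0+y) y = 0 from ee_of_le h (by omega)]
    have hcong : ∀ t ∈ Icc (0+1) (n-1), ee n h (t+y) y = beta n h y t := by
      intro t ht
      simp only [mem_Icc] at ht
      rw [ee_band h hn (by omega) (by omega), show t+y-y = t by ring]
    rw [Finset.sum_congr rfl hcong, show (0:ℤ)+1 = 1 by ring, anchor h hn H1 y, zero_add]
  | succ k ih =>
    intro y
    have e1 : ∑ i ∈ Icc (y+k) (y+k+n), ee n h i y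
        = (∑ i ∈ Icc (y+k) (y+k+n-1), ee n h i y) + ee n h (y+k+n) y := by
      have := sum_Icc_top (fun i => ee n h i y) (by omega : y+(k:ℤ) ≤ y+k+n)
      rw [this]
    have e2 : ∑ i ∈ Icc (y+k) (y+k+n), ee n h i y
        = ee n h (y+k) y + ∑ i ∈ Icc (y+k+1) (y+k+n), ee n h i y :=
      sum_Icc_bot _ (by omega)
    have st := ee_step h hn (show y ≤ y + (k:ℤ) by omega)
    have ihy := ih y
    push_cast
    rw [show y+((k:ℤ)+1)+n-1 = y+k+n by ring, show y + ((k:ℤ)+1) = y+k+1 by ring]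
    linear_combination (norm := abel1) e1 - e2 + ihy + st

lemma ID4 (hn : 0 < n) (H1 : ∀ a, lam n h a a = 0)
    (H2 : ∀ a b, lam n h a b + lam n h b a = 0) (a : ℤ) :
    h a a - h (a+1) a = h a (a+n) - h (a+1) (a+n) := by
  have k1 := hkey' h hn a a (a+n) rfl
  have k2 := hkey' h hn (a+1) a (a+n) rfl
  rw [H1 a, lanti h H2 (a+1) a] at k1
  rw [H1 (a+1)] at k2
  linear_combination (norm := abel1) k2 - k1

lemma ID3 (hn : 0 < n) (H1 : ∀ a, lam n h a a = 0)
    (H2 : ∀ a b, lam n h a b + lam n h b a = 0) (a s : ℤ) :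
    (h (a+s+1) (a+n) - h (a+s) (a+n)) - (h (a+1) (a+s) - h a (a+s))
      - h (a+s+1) a + h (a+s) a = h a (a+n+s) - h (a+1) (a+n+s) := by
  have k1 := hkey' h hn (a+s+1) a (a+n) rfl
  have k2 := hkey' h hn (a+s) a (a+n) rfl
  have k3 := hkey' h hn a (a+s) (a+n+s) (by ring)
  have k4 := hkey' h hn (a+1) (a+s) (a+n+s) (by ring)
  rw [lanti h H2 (a+s+1) a, lanti h H2 (a+s) a] at k3
  rw [lanti h H2 (a+s+1) (a+1), lanti h H2 (a+s) (a+1)] at k4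
  linear_combination (norm := abel1) k1 - k2 - k3 + k4

lemma ID2 (hn : 0 < n) (H2 : ∀ a b, lam n h a b + lam n h b a = 0) (a b' : ℤ) :
    (h (b'+1) (a+n) - h b' (a+n)) - (h (b'+1) a - h b' a) + (h a b' - h (a+1) b')
      = h a (b'+n) - h (a+1) (b'+n) := by
  have k1 := hkey' h hn (b'+1) a (a+n) rfl
  have k2 := hkey' h hn b' a (a+n) rfl
  have k3 := hkey' h hn a b' (b'+n) rfl
  have k4 := hkey' h hn (a+1) b' (b'+n) rfl
  rw [lanti h H2 (b'+1) a, lanti h H2 b' a] at k3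
  rw [lanti h H2 (b'+1) (a+1), lanti h H2 b' (a+1)] at k4
  linear_combination (norm := abel1) k1 - k2 - k3 + k4

lemma Row (hn : 0 < n) (H1 : ∀ a, lam n h a a = 0)
    (H2 : ∀ a b, lam n h a b + lam n h b a = 0) :
    ∀ (k : ℕ) (a b : ℤ), a + n ≤ b → (b - (a+n)).toNat = k →
    ee n h b (a+n) - ee n h b a = h a b - h (a+1) b := by
  intro k
  induction k using Nat.strong_induction_on with
  | _ k IH =>
  intro a b hab hk
  rcases lt_or_ge (b - (a+n)) n with hsmall | hbig
  · rcases eq_or_lt_of_le hab with hb0 | hb1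
    · -- b = a + n
      subst hb0
      rw [ee_of_le h (le_refl (a+n))]
      have st := ee_step h hn (le_refl a)
      rw [ee_of_le h (le_refl a)] at st
      rw [st]
      have id4 := ID4 h hn H1 H2 a
      linear_combination (norm := abel1) id4
    · -- a + n < b, s := b - a - n ∈ [1, n-1]
      obtain ⟨s, rfl⟩ : ∃ s, b = a+n+s := ⟨b-(a+n), by ring⟩
      have hs1 : 1 ≤ s := by omega
      have hs2 : s ≤ n-1 := by omega
      have e1 : ee n h (a+n+s) (a+n) = beta n h (a+n) (a+n+s-(a+n)) :=
        ee_band h hn (by omega) (by omega)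
      rw [show a+n+s-(a+n) = s by ring] at e1
      have st := ee_step h hn (show a ≤ a+s by omega)
      rw [show a+s+n = a+n+s by ring] at st
      have e2 : ee n h (a+s) a = beta n h a (a+s-a) := ee_band h hn (by omega) (by omega)
      rw [show a+s-a = s by ring] at e2
      have bs := beta_step h hn a s
      have hd : Del n h (a+n) s
          = (h (a+s+1) (a+n) - h (a+s) (a+n)) - (h (a+1) (a+s) - h a (a+s)) := by
        unfold Del rho
        rw [show a+n+s-n = a+s by ring, show a+s+(n-s)-n+1 = a+1 by ring,
          show a+s+(n-s)-n = a by ring, show a+s+1 = a+s+1 by ring]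
      have id3 := ID3 h hn H1 H2 a s
      linear_combination (norm := abel1) e1 - st - e2 + bs + hd + id3
  · -- step
    obtain ⟨b', rfl⟩ : ∃ b', b = b' + n := ⟨b-n, by ring⟩
    have st1 := ee_step h hn (show a+n ≤ b' by omega)
    have st2 := ee_step h hn (show a ≤ b' by omega)
    have ihx := IH ((b' - (a+n)).toNat) (by omega) a b' (by omega) rfl
    have id2 := ID2 h hn H2 a b'
    linear_combination (norm := abel1) st1 - st2 + ihx + id2

lemma main_le (hn : 0 < n) (H1 : ∀ a, lam n h a a = 0) {a b : ℤ} (hba : b ≤ a) :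
    (∑ i ∈ Icc a (a+n-1), ee n h i b) - (∑ i ∈ Icc a (a+n-1), ee n h b i) = h a b := by
  have h2 : ∑ i ∈ Icc a (a+n-1), ee n h b i = 0 :=
    Finset.sum_eq_zero (fun i hi => ee_of_le h (by simp only [mem_Icc] at hi; omega))
  obtain ⟨k, rfl⟩ : ∃ k : ℕ, a = b + k := ⟨(a-b).toNat, by omega⟩
  rw [h2, ColD h hn H1 k b, sub_zero]

lemma main_all (hn : 0 < n) (H1 : ∀ a, lam n h a a = 0)
    (H2 : ∀ a b, lam n h a b + lam n h b a = 0) :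
    ∀ (k : ℕ) (a b : ℤ), (b - a).toNat = k →
    (∑ i ∈ Icc a (a+n-1), ee n h i b) - (∑ i ∈ Icc a (a+n-1), ee n h b i) = h a b := by
  intro k
  induction k with
  | zero => intro a b hk; exact main_le h hn H1 (by omega)
  | succ k ih =>
    intro a b hk
    have hab : a < b := by omega
    have ih1 := ih (a+1) b (by omega)
    rw [show a+1+n-1 = a+n by ring] at ih1
    have e1 : ∑ i ∈ Icc a (a+n), ee n h i b
        = (∑ i ∈ Icc a (a+n-1), ee n h i b) + ee n h (a+n) b := sum_Icc_top _ (by omega)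
    have e2 : ∑ i ∈ Icc a (a+n), ee n h i b
        = ee n h a b + ∑ i ∈ Icc (a+1) (a+n), ee n h i b := sum_Icc_bot _ (by omega)
    have f1 : ∑ i ∈ Icc a (a+n), ee n h b i
        = (∑ i ∈ Icc a (a+n-1), ee n h b i) + ee n h b (a+n) := sum_Icc_top _ (by omega)
    have f2 : ∑ i ∈ Icc a (a+n), ee n h b i
        = ee n h b a + ∑ i ∈ Icc (a+1) (a+n), ee n h b i := sum_Icc_bot _ (by omega)
    have key : ee n h a b - ee n h (a+n) b - (ee n h b a - ee n h b (a+n))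
        = h a b - h (a+1) b := by
      rw [ee_of_le h (by omega : a ≤ b)]
      rcases le_or_gt (a+n) b with hc | hc
      · rw [ee_of_le h hc]
        have row := Row h hn H1 H2 ((b-(a+n)).toNat) a b hc rfl
        linear_combination (norm := abel1) row
      · rw [ee_of_le h (by omega : b ≤ a+n)]
        have g1 : ee n h (a+n) b = beta n h b (a+n-b) := ee_band h hn (by omega) (by omega)
        have g2 : ee n h b a = beta n h a (b-a) := ee_band h hn (by omega) (by omega)
        have bd := band h hn b (a+n-b) (by omega) (by omega)
        rw [show b+(a+n-b)-n = a by ring, show n-(a+n-b) = b-a by ring] at bd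
        have hr : rho n h b (a+n-b) = h (a+1) b - h a b := by
          unfold rho
          rw [show b+(a+n-b)-n+1 = a+1 by ring, show b+(a+n-b)-n = a by ring]
        rw [hr] at bd
        linear_combination (norm := abel1) - g1 - g2 - bd
    linear_combination (norm := abel1) e2 - e1 + f1 - f2 + ih1 + key

theorem exists_c (hn : 0 < n) (H1 : ∀ a, lam n h a a = 0)
    (H2 : ∀ a b, lam n h a b + lam n h b a = 0) :
    ∃ c : ℤ → ℤ → A,
      (∀ a b : ℤ, ∑ i ∈ Icc a (a+n-1), c i b = h a b) ∧
      (∀ a : ℤ, c a a = 0) ∧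
      (∀ a b : ℤ, c a b + c b a = 0) := by
  refine ⟨fun x y => ee n h x y - ee n h y x, fun a b => ?_, fun a => by abel, fun a b => by show ee n h a b - ee n h b a + (ee n h b a - ee n h a b) = 0; abel⟩
  rw [Finset.sum_sub_distrib]
  exact main_all h hn H1 H2 ((b-a).toNat) a b rfl

end

/-- Let `k` be a field, `N` a positive integer, and
`h : ℤ × ℤ → kˣ` a family of nonzero elements of `k`.  Setting
`λ_{a,b} := ∏_{j=b}^{b+N-1} h_{a,j}`, the multiplicative system
`∏_{j=a}^{a+N-1} c_{j,b} = h_{a,b}`, `c_{a,a} = 1`, `c_{a,b} c_{b,a} = 1`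
has a solution `c : ℤ × ℤ → kˣ` if and only if `λ_{a,a} = 1` for all `a`
and `λ_{a,b} λ_{b,a} = 1` for all `a, b`. -/
theorem stmt0 {k : Type*} [Field k] (N : ℕ) (hN : 0 < N) (h : ℤ × ℤ → kˣ) :
    (∃ c : ℤ × ℤ → kˣ,
      (∀ a b : ℤ, ∏ j ∈ Finset.Icc a (a + (N : ℤ) - 1), c (j, b) = h (a, b)) ∧
      (∀ a : ℤ, c (a, a) = 1) ∧
      (∀ a b : ℤ, c (a, b) * c (b, a) = 1)) ↔
    ((∀ a : ℤ, (∏ j ∈ Finset.Icc a (a + (N : ℤ) - 1), h (a, j)) = 1) ∧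
     (∀ a b : ℤ,
        (∏ j ∈ Finset.Icc b (b + (N : ℤ) - 1), h (a, j)) *
        (∏ j ∈ Finset.Icc a (a + (N : ℤ) - 1), h (b, j)) = 1)) := by
  constructor
  · rintro ⟨c, hc1, hc2, hc3⟩
    constructor
    · intro a
      rw [Finset.prod_congr rfl (fun j _ => (hc1 a j).symm)]
      rw [← Finset.prod_product
        (f := fun p : ℤ × ℤ => c (p.2, p.1))
        (s := Finset.Icc a (a + (N : ℤ) - 1)) (t := Finset.Icc a (a + (N : ℤ) - 1))]
      apply Finset.prod_involution (g := fun p _ => (p.2, p.1))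
      · intro p _
        exact hc3 p.2 p.1
      · intro p _ hfp hgp
        apply hfp
        have : p.2 = p.1 := congrArg Prod.fst hgp
        rw [this]
        exact hc2 p.1
      · intro p hp
        simp only [Finset.mem_product] at hp ⊢
        exact ⟨hp.2, hp.1⟩
      · intro p _
        rfl
    · intro a b
      rw [Finset.prod_congr rfl (fun j _ => (hc1 a j).symm),
        Finset.prod_congr rfl (fun j _ => (hc1 b j).symm)]
      rw [Finset.prod_comm (s := Finset.Icc b (b + (N : ℤ) - 1))
        (t := Finset.Icc a (a + (N : ℤ) - 1)) (f := fun j i => c (i, j))]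
      rw [← Finset.prod_mul_distrib]
      apply Finset.prod_eq_one
      intro x _
      rw [← Finset.prod_mul_distrib]
      apply Finset.prod_eq_one
      intro y _
      exact hc3 x y
  · rintro ⟨H1m, H2m⟩
    have hn : 0 < (N : ℤ) := by exact_mod_cast hN
    set h' : ℤ → ℤ → Additive kˣ := fun x y => Additive.ofMul (h (x, y)) with hh'
    have H1 : ∀ a, lam (N : ℤ) h' a a = 0 := by
      intro a
      show ∑ j ∈ Finset.Icc a (a + (N:ℤ) - 1), Additive.ofMul (h (a, j)) = 0
      rw [← ofMul_prod, H1m a]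
      rfl
    have H2 : ∀ a b, lam (N : ℤ) h' a b + lam (N : ℤ) h' b a = 0 := by
      intro a b
      show (∑ j ∈ Finset.Icc b (b + (N:ℤ) - 1), Additive.ofMul (h (a, j)))
        + (∑ j ∈ Finset.Icc a (a + (N:ℤ) - 1), Additive.ofMul (h (b, j))) = 0
      rw [← ofMul_prod, ← ofMul_prod, ← ofMul_mul, H2m a b]
      rfl
    obtain ⟨c', hc1, hc2, hc3⟩ := exists_c h' hn H1 H2
    refine ⟨fun p => Additive.toMul (c' p.1 p.2), fun a b => ?_, fun a => ?_, fun a b => ?_⟩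
    · apply Additive.ofMul.injective
      rw [ofMul_prod]
      exact hc1 a b
    · show Additive.toMul (c' a a) = 1
      rw [hc2 a]
      rfl
    · show Additive.toMul (c' a b) * Additive.toMul (c' b a) = 1
      rw [← toMul_add, hc3 a b]
      rfl
end

section
/- Let k be a field, let N be a positive integer, and let h : ℤ × ℤ → kˣ be a family of nonzero elements of k. Define λ_{a,b} := ∏_{j=b}^{b+N-1} h_{a,j} for a, b ∈ ℤ, and assume λ_{a,a} = 1 for all a ∈ ℤ and λ_{a,b} · λ_{b,a} = 1 for all a, b ∈ ℤ. Let c⁰ be any family of nonzero elements of k indexed by pairs (a,b) with 0 ≤ a, b ≤ N−2 such that c⁰_{a,a} = 1 and c⁰_{a,b} · c⁰_{b,a} = 1 for all 0 ≤ a, b ≤ N−2. Then there exists a family c : ℤ × ℤ → kˣ satisfying (i) ∏_{j=a}^{a+N-1} c_{j,b} = h_{a,b} for all a, b ∈ ℤ, (ii) c_{a,a} = 1 for all a ∈ ℤ, (iii) c_{a,b} · c_{b,a} = 1 for all a, b ∈ ℤ, and (iv) c_{a,b} = c⁰_{a,b} whenever 0 ≤ a, b ≤ N−2. -/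
open Finset

namespace Stmt1

variable {k : Type*} [Field k]

/-- Signed product `∏_{i=0}^{n-1} f i` for `n : ℤ` (inverse for negative `n`). -/
def zp (n : ℤ) (f : ℤ → kˣ) : kˣ :=
  (∏ i ∈ Finset.range n.toNat, f i) *
    (∏ i ∈ Finset.range (-n).toNat, f (-(i : ℤ) - 1))⁻¹

lemma zp_zero (f : ℤ → kˣ) : zp 0 f = 1 := by simp [zp]

lemma zp_succ (n : ℤ) (f : ℤ → kˣ) : zp (n + 1) f = zp n f * f n := by
  rcases le_or_gt 0 n with hn | hn
  · have h1 : (n + 1).toNat = n.toNat + 1 := by omega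
    have h2 : (-n).toNat = 0 := by omega
    have h3 : (-(n + 1)).toNat = 0 := by omega
    have h4 : (n.toNat : ℤ) = n := Int.toNat_of_nonneg hn
    rw [zp, zp, h1, h2, h3, Finset.prod_range_succ, h4]
    simp
  · have h1 : (n + 1).toNat = 0 := by omega
    have h2 : n.toNat = 0 := by omega
    have h3 : (-n).toNat = (-(n + 1)).toNat + 1 := by omega
    have h4 : -(((-(n + 1)).toNat : ℤ)) - 1 = n := by omega
    rw [zp, zp, h1, h2, h3, Finset.prod_range_succ, h4]
    simp only [Finset.range_zero, Finset.prod_empty, one_mul]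
    rw [mul_inv_rev, mul_comm ((f n)⁻¹), mul_assoc, inv_mul_cancel, mul_one]

lemma zp_pred (n : ℤ) (f : ℤ → kˣ) : zp (n - 1) f = zp n f * (f (n - 1))⁻¹ := by
  have := zp_succ (n - 1) f
  rw [sub_add_cancel] at this
  rw [this]
  group

lemma zp_mul (n : ℤ) (f g : ℤ → kˣ) :
    zp n (fun i => f i * g i) = zp n f * zp n g := by
  simp only [zp, Finset.prod_mul_distrib]
  rw [← Units.val_inj]
  push_cast
  field_simp
  try ring

lemma zp_congr (n : ℤ) {f g : ℤ → kˣ} (hfg : ∀ i, f i = g i) : zp n f = zp n g := by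
  have : f = g := funext hfg
  rw [this]

lemma zp_telescope (G : ℤ → kˣ) (f : ℤ → kˣ)
    (hf : ∀ i, f i = G (i + 1) * (G i)⁻¹) (n : ℤ) : zp n f = G n * (G 0)⁻¹ := by
  induction n using Int.induction_on with
  | zero => simp [zp_zero]
  | succ i ih =>
      rw [zp_succ, ih, hf]
      rw [← Units.val_inj]; push_cast; field_simp; try ring
  | pred i ih =>
      have e : (-(i : ℤ) - 1) = (-(i : ℤ)) - 1 := by ring
      rw [e, zp_pred, ih, hf]
      rw [← Units.val_inj]; push_cast; field_simp; try ring

/-- Periodic induction on `ℤ`. -/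
lemma periodic_ind (Nz : ℤ) (hN : 0 < Nz) {P : ℤ → Prop}
    (base : ∀ r, 0 ≤ r → r < Nz → P r) (step : ∀ a, P a ↔ P (a + Nz)) : ∀ a, P a := by
  have key : ∀ n : ℤ, ∀ a : ℤ, P a ↔ P (a + n * Nz) := by
    intro n
    induction n using Int.induction_on with
    | zero => intro a; simp
    | succ i ih =>
        intro a
        rw [ih a, step (a + (i : ℤ) * Nz),
          show a + (i : ℤ) * Nz + Nz = a + ((i : ℤ) + 1) * Nz by ring]
    | pred i ih =>
        intro a
        rw [ih a, show a + (-(i : ℤ)) * Nz = (a + (-(i : ℤ) - 1) * Nz) + Nz by ring,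
          ← step (a + (-(i : ℤ) - 1) * Nz)]
  intro a
  have h1 : 0 ≤ a % Nz := Int.emod_nonneg a (by omega)
  have h2 : a % Nz < Nz := Int.emod_lt_of_pos a hN
  have h3 := key (a / Nz) (a % Nz)
  rw [show a % Nz + a / Nz * Nz = a by rw [mul_comm]; exact Int.emod_add_mul_ediv a Nz] at h3
  exact h3.mp (base _ h1 h2)

lemma shift_iff {M : Type*} [CommGroup M] {S S' u u' w : M}
    (e : S' = S * w) (e2 : u' = u * w) : S = u ↔ S' = u' := by
  constructor
  · intro hh; rw [e, hh, e2]
  · intro hh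
    have : S * w = u * w := by rw [← e, hh, e2]
    exact mul_right_cancel this

/-- Reindex a product over `Icc a (a+N-1)` as a product over `range N`. -/
lemma prod_Icc_range {M : Type*} [CommMonoid M] (f : ℤ → M) (a : ℤ) (N : ℕ) :
    (∏ j ∈ Icc a (a + (N : ℤ) - 1), f j) = ∏ i ∈ range N, f (a + i) := by
  induction N with
  | zero =>
      rw [Finset.Icc_eq_empty (by push_cast; omega)]
      simp
  | succ n ih =>
      rw [prod_range_succ, ← ih,
        show a + ((n + 1 : ℕ) : ℤ) - 1 = a + (n : ℤ) by push_cast; ring]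
      have hsplit : Icc a (a + (n : ℤ)) = insert (a + (n : ℤ)) (Icc a (a + (n : ℤ) - 1)) := by
        ext x; simp; omega
      rw [hsplit, Finset.prod_insert (by simp)]
      exact mul_comm _ _

section Lam

variable (h : ℤ × ℤ → kˣ) (N : ℕ)

/-- `lam h N x y = ∏_{j=y}^{y+N-1} h (x, j)` in `range` form. -/
def lam (x y : ℤ) : kˣ := ∏ i ∈ range N, h (x, y + i)

lemma lam_eq_Icc (x y : ℤ) :
    lam h N x y = ∏ j ∈ Icc y (y + (N : ℤ) - 1), h (x, j) :=
  (prod_Icc_range (fun j => h (x, j)) y N).symm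

lemma lam_slide (x y : ℤ) :
    lam h N x (y + 1) = lam h N x y * h (x, y + N) * (h (x, y))⁻¹ := by
  have e1 : lam h N x (y + 1) = ∏ i ∈ range N, h (x, y + ((i : ℤ) + 1)) := by
    unfold lam
    exact Finset.prod_congr rfl fun i _ => by rw [show y + 1 + (i : ℤ) = y + ((i : ℤ) + 1) by ring]
  have e2 := Finset.prod_range_succ' (fun i : ℕ => h (x, y + i)) N
  have e3 := Finset.prod_range_succ (fun i : ℕ => h (x, y + i)) N
  rw [e1]
  have e4 : (∏ i ∈ range N, h (x, y + ((i : ℤ) + 1))) =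
      ∏ i ∈ range N, h (x, y + ((i : ℕ) + 1 : ℕ)) := by
    exact Finset.prod_congr rfl fun i _ => by push_cast; ring_nf
  rw [e4]
  have : (∏ i ∈ range N, h (x, y + ((i : ℕ) + 1 : ℕ))) * h (x, y + (0:ℕ)) =
      (∏ i ∈ range N, h (x, y + (i : ℕ))) * h (x, y + (N : ℕ)) := by
    rw [← e2, e3]
  have goal2 : (∏ i ∈ range N, h (x, y + ((i : ℕ) + 1 : ℕ))) =
      (∏ i ∈ range N, h (x, y + (i : ℕ))) * h (x, y + (N : ℕ)) * (h (x, y + (0:ℕ)))⁻¹ := by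
    rw [← this]
    rw [mul_inv_cancel_right]
  rw [goal2]
  unfold lam
  norm_num

section Hyps

variable (hld : ∀ a : ℤ, lam h N a a = 1)
    (hla : ∀ a b : ℤ, lam h N a b * lam h N b a = 1)

include hla in
lemma step_left (x y : ℤ) :
    lam h N (x + 1) y = lam h N x y * h (y, x) * (h (y, x + N))⁻¹ := by
  have t1 : lam h N (x + 1) y = (lam h N y (x + 1))⁻¹ :=
    eq_inv_of_mul_eq_one_left (hla (x + 1) y)
  have t2 : (lam h N y x)⁻¹ = lam h N x y :=
    inv_eq_of_mul_eq_one_right (hla y x)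
  rw [t1, lam_slide, ← t2]
  rw [← Units.val_inj]; push_cast; field_simp; try ring

include hla in
lemma comm4 (x b : ℤ) :
    h (x + 1, b + N) * (h (x, b + N))⁻¹ * (h (x + 1, b) * (h (x, b))⁻¹)⁻¹ =
      h (b, x + N) * (h (b + 1, x + N))⁻¹ * (h (b, x) * (h (b + 1, x))⁻¹)⁻¹ := by
  have Q1 : lam h N (x + 1) (b + 1) =
      lam h N x b * (h (x, b + N) * (h (x, b))⁻¹ * h (b + 1, x) * (h (b + 1, x + N))⁻¹) := by
    rw [step_left h N hla x (b + 1), lam_slide]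
    rw [← Units.val_inj]; push_cast; field_simp; try ring
  have Q2 : lam h N (x + 1) (b + 1) =
      lam h N x b * (h (b, x) * (h (b, x + N))⁻¹ * h (x + 1, b + N) * (h (x + 1, b))⁻¹) := by
    rw [lam_slide, step_left h N hla x b]
    rw [← Units.val_inj]; push_cast; field_simp; try ring
  have key := mul_left_cancel (Q1.symm.trans Q2)
  rw [← Units.val_inj] at key ⊢
  push_cast at key ⊢
  field_simp at key ⊢
  linear_combination (-1 : k) * key

include hld hla in
lemma diagmul (a : ℤ) :
    h (a + 1, a) * (h (a, a))⁻¹ * (h (a, a + N) * (h (a + 1, a + N))⁻¹) = 1 := by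
  have e1 : lam h N a (a + 1) = h (a, a + N) * (h (a, a))⁻¹ := by
    rw [lam_slide, hld a]; rw [← Units.val_inj]; push_cast; field_simp; try ring
  have e2 : lam h N (a + 1) (a + 1) = lam h N (a + 1) a * h (a + 1, a + N) * (h (a + 1, a))⁻¹ :=
    lam_slide h N (a + 1) a
  rw [hld (a + 1)] at e2
  have t1 : lam h N (a + 1) a = (h (a, a + N) * (h (a, a))⁻¹)⁻¹ := by
    rw [eq_inv_of_mul_eq_one_right (hla a (a + 1)), e1]
  rw [t1] at e2
  have e2' : h (a + 1, a) = (h (a, a + N) * (h (a, a))⁻¹)⁻¹ * h (a + 1, a + N) := by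
    have := eq_mul_inv_iff_mul_eq.mp e2
    rw [one_mul] at this
    exact this
  rw [e2']
  rw [← Units.val_inj]; push_cast; field_simp; try ring

include hla in
lemma seed_ratio (b : ℤ) :
    lam h N b 0 * (lam h N (b + 1) 0)⁻¹ = h (0, b + N) * (h (0, b))⁻¹ := by
  have t1 : lam h N b 0 = (lam h N 0 b)⁻¹ := eq_inv_of_mul_eq_one_left (hla b 0)
  have t2 : lam h N (b + 1) 0 = (lam h N 0 (b + 1))⁻¹ :=
    eq_inv_of_mul_eq_one_left (hla (b + 1) 0)
  rw [t1, t2, lam_slide]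
  rw [← Units.val_inj]; push_cast; field_simp; try ring

end Hyps

end Lam

section D

variable (N : ℕ) (h c0 : ℤ × ℤ → kˣ)

noncomputable def Efun (y : ℤ) : kˣ := h (0, y) * (∏ j ∈ Icc (0:ℤ) ((N:ℤ) - 2), c0 (j, y))⁻¹

noncomputable def dd (x y : ℤ) : kˣ :=
  if x ≤ (N:ℤ) - 2 then (if y ≤ (N:ℤ) - 2 then c0 (x, y) else (Efun N h c0 x)⁻¹)
  else (if y ≤ (N:ℤ) - 2 then Efun N h c0 y else 1)

variable (hc0diag : ∀ a : ℤ, 0 ≤ a → a ≤ (N : ℤ) - 2 → c0 (a, a) = 1)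
variable (hc0anti : ∀ a b : ℤ, 0 ≤ a → a ≤ (N : ℤ) - 2 → 0 ≤ b → b ≤ (N : ℤ) - 2 →
      c0 (a, b) * c0 (b, a) = 1)

lemma dd_eq_c0 (x y : ℤ) (hx2 : x ≤ (N:ℤ) - 2) (hy2 : y ≤ (N:ℤ) - 2) :
    dd N h c0 x y = c0 (x, y) := by simp [dd, hx2, hy2]

include hc0diag in
lemma dd_diag (x : ℤ) (hx : 0 ≤ x) : dd N h c0 x x = 1 := by
  by_cases hx2 : x ≤ (N:ℤ) - 2
  · simp only [dd, if_pos hx2]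
    exact hc0diag x hx hx2
  · simp [dd, hx2]

include hc0anti in
lemma dd_anti (x y : ℤ) (hx : 0 ≤ x) (hy : 0 ≤ y) :
    dd N h c0 x y * dd N h c0 y x = 1 := by
  by_cases hx2 : x ≤ (N:ℤ) - 2 <;> by_cases hy2 : y ≤ (N:ℤ) - 2
  · simp only [dd, if_pos hx2, if_pos hy2]
    exact hc0anti x y hx hx2 hy hy2
  · simp [dd, hx2, hy2]
  · simp [dd, hx2, hy2]
  · simp [dd, hx2, hy2]

include hc0diag hc0anti in
lemma sq_one :
    ∏ j ∈ Icc (0:ℤ) ((N:ℤ) - 2), ∏ i ∈ Icc (0:ℤ) ((N:ℤ) - 2), c0 (i, j) = 1 := by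
  rw [← Finset.prod_product' (f := fun j i => c0 (i, j))]
  refine Finset.prod_involution (fun p _ => (p.2, p.1)) ?_ ?_ ?_ ?_
  · intro p hp
    simp only [Finset.mem_product, Finset.mem_Icc] at hp
    exact hc0anti p.2 p.1 hp.2.1 hp.2.2 hp.1.1 hp.1.2
  · intro p hp hne heq
    simp only [Finset.mem_product, Finset.mem_Icc] at hp
    have h1 : p.1 = p.2 := congrArg Prod.snd heq
    apply hne
    rw [show p = (p.1, p.2) from rfl, ← h1]
    exact hc0diag p.1 (h1 ▸ hp.2.1) (h1 ▸ hp.2.2)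
  · intro p hp
    rw [Finset.mem_product] at hp ⊢
    exact ⟨hp.2, hp.1⟩
  · intro p hp
    rfl

include hc0diag hc0anti in
lemma dd_col (hN : 0 < N) (hd0 : (∏ j ∈ Icc (0:ℤ) ((N:ℤ) - 1), h (0, j)) = 1) :
    ∀ y, 0 ≤ y → y ≤ (N:ℤ) - 1 →
      ∏ j ∈ Icc (0:ℤ) ((N:ℤ) - 1), dd N h c0 j y = h (0, y) := by
  intro y hy hy1
  have hsplit : Icc (0:ℤ) ((N:ℤ) - 1) = insert ((N:ℤ) - 1) (Icc (0:ℤ) ((N:ℤ) - 2)) := by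
    ext x; simp; omega
  have hnotmem : ((N:ℤ) - 1) ∉ Icc (0:ℤ) ((N:ℤ) - 2) := by simp; omega
  have hNle : ¬ ((N:ℤ) - 1 ≤ (N:ℤ) - 2) := by omega
  by_cases hy2 : y ≤ (N:ℤ) - 2
  · rw [hsplit, Finset.prod_insert hnotmem]
    have e1 : dd N h c0 ((N:ℤ) - 1) y = Efun N h c0 y := by simp [dd, hNle, hy2]
    have e2 : ∏ j ∈ Icc (0:ℤ) ((N:ℤ) - 2), dd N h c0 j y
        = ∏ j ∈ Icc (0:ℤ) ((N:ℤ) - 2), c0 (j, y) :=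
      Finset.prod_congr rfl fun j hj => by simp [dd, (Finset.mem_Icc.mp hj).2, hy2]
    rw [e1, e2, Efun]
    exact inv_mul_cancel_right _ _
  · have hy3 : y = (N:ℤ) - 1 := by omega
    subst hy3
    rw [hsplit, Finset.prod_insert hnotmem]
    have e1 : dd N h c0 ((N:ℤ) - 1) ((N:ℤ) - 1) = 1 := by simp [dd, hNle]
    have e2 : ∏ j ∈ Icc (0:ℤ) ((N:ℤ) - 2), dd N h c0 j ((N:ℤ) - 1)
        = ∏ j ∈ Icc (0:ℤ) ((N:ℤ) - 2), (Efun N h c0 j)⁻¹ :=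
      Finset.prod_congr rfl fun j hj => by simp [dd, (Finset.mem_Icc.mp hj).2, hNle]
    rw [e1, e2, one_mul]
    have e3 : ∏ j ∈ Icc (0:ℤ) ((N:ℤ) - 2), (Efun N h c0 j)⁻¹
        = (∏ j ∈ Icc (0:ℤ) ((N:ℤ) - 2), ∏ i ∈ Icc (0:ℤ) ((N:ℤ) - 2), c0 (i, j)) *
          (∏ j ∈ Icc (0:ℤ) ((N:ℤ) - 2), h (0, j))⁻¹ := by
      simp only [Efun, mul_inv_rev, inv_inv]
      rw [Finset.prod_mul_distrib, Finset.prod_inv_distrib]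
    rw [e3, sq_one N c0 hc0diag hc0anti, one_mul]
    rw [hsplit, Finset.prod_insert hnotmem] at hd0
    exact inv_eq_of_mul_eq_one_left hd0

end D

section C

variable (N : ℕ) (h c0 : ℤ × ℤ → kˣ)

noncomputable def cc (a b : ℤ) : kˣ :=
  dd N h c0 (a % (N:ℤ)) (b % (N:ℤ))
  * zp (b / (N:ℤ))
      (fun i => h (b % (N:ℤ) + i * (N:ℤ), a % (N:ℤ)) * (h (b % (N:ℤ) + i * (N:ℤ) + 1, a % (N:ℤ)))⁻¹)
  * zp (a / (N:ℤ))
      (fun i => h (a % (N:ℤ) + i * (N:ℤ) + 1, b) * (h (a % (N:ℤ) + i * (N:ℤ), b))⁻¹)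

lemma cc_base (hN : 0 < N) (a b : ℤ) (ha : 0 ≤ a) (ha2 : a < (N:ℤ))
    (hb : 0 ≤ b) (hb2 : b < (N:ℤ)) : cc N h c0 a b = dd N h c0 a b := by
  unfold cc
  rw [Int.emod_eq_of_lt ha ha2, Int.emod_eq_of_lt hb hb2,
    Int.ediv_eq_zero_of_lt ha ha2, Int.ediv_eq_zero_of_lt hb hb2, zp_zero, zp_zero,
    mul_one, mul_one]

lemma cc_P1 (hN : 0 < N) (a b : ℤ) :
    cc N h c0 (a + N) b = cc N h c0 a b * (h (a + 1, b) * (h (a, b))⁻¹) := by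
  have hNz : ((N:ℤ)) ≠ 0 := by exact_mod_cast hN.ne'
  have hm : (a + (N:ℤ)) % (N:ℤ) = a % (N:ℤ) := by
    rw [show a + (N:ℤ) = a + (N:ℤ) * 1 by ring, Int.add_mul_emod_self_left]
  have hdv : (a + (N:ℤ)) / (N:ℤ) = a / (N:ℤ) + 1 := by
    rw [show a + (N:ℤ) = a + 1 * (N:ℤ) by ring, Int.add_mul_ediv_right _ _ hNz]
  have harga : a % (N:ℤ) + a / (N:ℤ) * (N:ℤ) = a := by
    rw [mul_comm]; exact Int.emod_add_mul_ediv a (N:ℤ)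
  unfold cc
  simp only [hm, hdv, zp_succ, harga]
  rw [← Units.val_inj]; push_cast; field_simp; try ring

lemma cc_P2 (hN : 0 < N)
    (hla : ∀ a b : ℤ, lam h N a b * lam h N b a = 1) (a b : ℤ) :
    cc N h c0 a (b + N) = cc N h c0 a b * (h (b, a) * (h (b + 1, a))⁻¹) := by
  have hNz : ((N:ℤ)) ≠ 0 := by exact_mod_cast hN.ne'
  have hm : (b + (N:ℤ)) % (N:ℤ) = b % (N:ℤ) := by
    rw [show b + (N:ℤ) = b + (N:ℤ) * 1 by ring, Int.add_mul_emod_self_left]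
  have hdv : (b + (N:ℤ)) / (N:ℤ) = b / (N:ℤ) + 1 := by
    rw [show b + (N:ℤ) = b + 1 * (N:ℤ) by ring, Int.add_mul_ediv_right _ _ hNz]
  have hargb : b % (N:ℤ) + b / (N:ℤ) * (N:ℤ) = b := by
    rw [mul_comm]; exact Int.emod_add_mul_ediv b (N:ℤ)
  have harga : a % (N:ℤ) + a / (N:ℤ) * (N:ℤ) = a := by
    rw [mul_comm]; exact Int.emod_add_mul_ediv a (N:ℤ)
  have congrA : (fun i : ℤ => h (a % (N:ℤ) + i * (N:ℤ) + 1, b + (N:ℤ)) *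
        (h (a % (N:ℤ) + i * (N:ℤ), b + (N:ℤ)))⁻¹)
      = fun i : ℤ => (h (a % (N:ℤ) + i * (N:ℤ) + 1, b) * (h (a % (N:ℤ) + i * (N:ℤ), b))⁻¹) *
        ((h (b, a % (N:ℤ) + (i + 1) * (N:ℤ)) * (h (b + 1, a % (N:ℤ) + (i + 1) * (N:ℤ)))⁻¹) *
         (h (b, a % (N:ℤ) + i * (N:ℤ)) * (h (b + 1, a % (N:ℤ) + i * (N:ℤ)))⁻¹)⁻¹) := by
    funext i
    have hc := comm4 h N hla (a % (N:ℤ) + i * (N:ℤ)) b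
    rw [show a % (N:ℤ) + (i + 1) * (N:ℤ) = a % (N:ℤ) + i * (N:ℤ) + (N:ℤ) by ring]
    rw [← Units.val_inj] at hc ⊢; push_cast at hc ⊢; field_simp at hc ⊢
    linear_combination hc
  have hAsplit : zp (a / (N:ℤ))
      (fun i : ℤ => (h (a % (N:ℤ) + i * (N:ℤ) + 1, b) * (h (a % (N:ℤ) + i * (N:ℤ), b))⁻¹) *
        ((h (b, a % (N:ℤ) + (i + 1) * (N:ℤ)) * (h (b + 1, a % (N:ℤ) + (i + 1) * (N:ℤ)))⁻¹) *
         (h (b, a % (N:ℤ) + i * (N:ℤ)) * (h (b + 1, a % (N:ℤ) + i * (N:ℤ)))⁻¹)⁻¹))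
      = zp (a / (N:ℤ))
        (fun i : ℤ => h (a % (N:ℤ) + i * (N:ℤ) + 1, b) * (h (a % (N:ℤ) + i * (N:ℤ), b))⁻¹) *
        zp (a / (N:ℤ))
        (fun i : ℤ => (h (b, a % (N:ℤ) + (i + 1) * (N:ℤ)) * (h (b + 1, a % (N:ℤ) + (i + 1) * (N:ℤ)))⁻¹) *
         (h (b, a % (N:ℤ) + i * (N:ℤ)) * (h (b + 1, a % (N:ℤ) + i * (N:ℤ)))⁻¹)⁻¹) :=
    zp_mul _ _ _
  have htele : zp (a / (N:ℤ))
        (fun i : ℤ => (h (b, a % (N:ℤ) + (i + 1) * (N:ℤ)) * (h (b + 1, a % (N:ℤ) + (i + 1) * (N:ℤ)))⁻¹) *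
         (h (b, a % (N:ℤ) + i * (N:ℤ)) * (h (b + 1, a % (N:ℤ) + i * (N:ℤ)))⁻¹)⁻¹)
      = (h (b, a % (N:ℤ) + a / (N:ℤ) * (N:ℤ)) * (h (b + 1, a % (N:ℤ) + a / (N:ℤ) * (N:ℤ)))⁻¹) *
        (h (b, a % (N:ℤ) + 0 * (N:ℤ)) * (h (b + 1, a % (N:ℤ) + 0 * (N:ℤ)))⁻¹)⁻¹ :=
    zp_telescope (fun j : ℤ => h (b, a % (N:ℤ) + j * (N:ℤ)) *
      (h (b + 1, a % (N:ℤ) + j * (N:ℤ)))⁻¹) _ (fun i => rfl) _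
  unfold cc
  simp only [hm, hdv, zp_succ]
  rw [congrA, hAsplit, htele]
  simp only [harga, hargb, zero_mul, add_zero]
  rw [← Units.val_inj]; push_cast; field_simp; try ring

end C

end Stmt1

open Finset Stmt1

/-- Let `k` be a field, `N` a positive integer, and
`h : ℤ × ℤ → kˣ`.  Set `λ_{a,b} := ∏_{j=b}^{b+N-1} h_{a,j}` and assume
`λ_{a,a} = 1` for all `a` and `λ_{a,b} λ_{b,a} = 1` for all `a, b`.  Let
`c⁰` be any family of units indexed by the square `0 ≤ a, b ≤ N - 2` with
`c⁰_{a,a} = 1` and `c⁰_{a,b} c⁰_{b,a} = 1`.  Then there is a family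
`c : ℤ × ℤ → kˣ` with `∏_{j=a}^{a+N-1} c_{j,b} = h_{a,b}`, `c_{a,a} = 1`,
`c_{a,b} c_{b,a} = 1`, and `c_{a,b} = c⁰_{a,b}` on the square
`0 ≤ a, b ≤ N - 2`. -/
theorem stmt1 {k : Type*} [Field k] (N : ℕ) (hN : 0 < N) (h : ℤ × ℤ → kˣ)
    (hdiag : ∀ a : ℤ, (∏ j ∈ Finset.Icc a (a + (N : ℤ) - 1), h (a, j)) = 1)
    (hanti : ∀ a b : ℤ,
      (∏ j ∈ Finset.Icc b (b + (N : ℤ) - 1), h (a, j)) *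
      (∏ j ∈ Finset.Icc a (a + (N : ℤ) - 1), h (b, j)) = 1)
    (c0 : ℤ × ℤ → kˣ)
    (hc0diag : ∀ a : ℤ, 0 ≤ a → a ≤ (N : ℤ) - 2 → c0 (a, a) = 1)
    (hc0anti : ∀ a b : ℤ, 0 ≤ a → a ≤ (N : ℤ) - 2 → 0 ≤ b → b ≤ (N : ℤ) - 2 →
      c0 (a, b) * c0 (b, a) = 1) :
    ∃ c : ℤ × ℤ → kˣ,
      (∀ a b : ℤ, ∏ j ∈ Finset.Icc a (a + (N : ℤ) - 1), c (j, b) = h (a, b)) ∧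
      (∀ a : ℤ, c (a, a) = 1) ∧
      (∀ a b : ℤ, c (a, b) * c (b, a) = 1) ∧
      (∀ a b : ℤ, 0 ≤ a → a ≤ (N : ℤ) - 2 → 0 ≤ b → b ≤ (N : ℤ) - 2 →
        c (a, b) = c0 (a, b)) := by
  classical
  have hNz : (0:ℤ) < (N:ℤ) := by exact_mod_cast hN
  have hld : ∀ a : ℤ, lam h N a a = 1 := fun a => by rw [lam_eq_Icc]; exact hdiag a
  have hla : ∀ a b : ℤ, lam h N a b * lam h N b a = 1 := fun a b => by
    rw [lam_eq_Icc, lam_eq_Icc]; exact hanti a b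
  -- (iv)
  have hagree : ∀ a b : ℤ, 0 ≤ a → a ≤ (N : ℤ) - 2 → 0 ≤ b → b ≤ (N : ℤ) - 2 →
      cc N h c0 a b = c0 (a, b) := by
    intro a b ha ha2 hb hb2
    rw [cc_base N h c0 hN a b ha (by omega) hb (by omega)]
    exact dd_eq_c0 N h c0 a b ha2 hb2
  -- (ii)
  have hdiagc : ∀ a : ℤ, cc N h c0 a a = 1 := by
    apply periodic_ind (N:ℤ) hNz (P := fun a => cc N h c0 a a = 1)
    · intro r hr hr2
      rw [cc_base N h c0 hN r r hr hr2 hr hr2]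
      exact dd_diag N h c0 hc0diag r hr
    · intro a
      have e : cc N h c0 (a + N) (a + N) = cc N h c0 a a := by
        rw [cc_P2 N h c0 hN hla (a + N) a, cc_P1 N h c0 hN a a, mul_assoc,
          diagmul h N hld hla a, mul_one]
      exact ⟨fun hp => by rw [e]; exact hp, fun hp => by rwa [e] at hp⟩
  -- (iii)
  have anti1 : ∀ a : ℤ, 0 ≤ a → a < (N:ℤ) → ∀ b : ℤ,
      cc N h c0 a b * cc N h c0 b a = 1 := by
    intro a ha ha2
    apply periodic_ind (N:ℤ) hNz (P := fun b => cc N h c0 a b * cc N h c0 b a = 1)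
    · intro s hs hs2
      rw [cc_base N h c0 hN a s ha ha2 hs hs2, cc_base N h c0 hN s a hs hs2 ha ha2]
      exact dd_anti N h c0 hc0anti a s ha hs
    · intro b
      have e : cc N h c0 a (b + N) * cc N h c0 (b + N) a =
          cc N h c0 a b * cc N h c0 b a := by
        rw [cc_P2 N h c0 hN hla a b, cc_P1 N h c0 hN b a]
        rw [← Units.val_inj]; push_cast; field_simp; try ring
      exact ⟨fun hp => by rw [e]; exact hp, fun hp => by rwa [e] at hp⟩
  have hantic : ∀ a b : ℤ, cc N h c0 a b * cc N h c0 b a = 1 := by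
    intro a b
    revert a
    apply periodic_ind (N:ℤ) hNz (P := fun a => cc N h c0 a b * cc N h c0 b a = 1)
    · intro r hr hr2
      exact anti1 r hr hr2 b
    · intro a
      have e : cc N h c0 (a + N) b * cc N h c0 b (a + N) =
          cc N h c0 a b * cc N h c0 b a := by
        rw [cc_P1 N h c0 hN a b, cc_P2 N h c0 hN hla b a]
        rw [← Units.val_inj]; push_cast; field_simp; try ring
      exact ⟨fun hp => by rw [e]; exact hp, fun hp => by rwa [e] at hp⟩
  -- (i)
  have hd0 : ∏ j ∈ Icc (0:ℤ) ((N:ℤ) - 1), h (0, j) = 1 := by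
    have := hdiag 0
    rwa [show (0:ℤ) + (N:ℤ) - 1 = (N:ℤ) - 1 by ring] at this
  have S0 : ∀ b : ℤ, ∏ j ∈ Icc (0:ℤ) ((N:ℤ) - 1), cc N h c0 j b = h (0, b) := by
    apply periodic_ind (N:ℤ) hNz
      (P := fun b => ∏ j ∈ Icc (0:ℤ) ((N:ℤ) - 1), cc N h c0 j b = h (0, b))
    · intro s hs hs2
      have e : ∏ j ∈ Icc (0:ℤ) ((N:ℤ) - 1), cc N h c0 j s
          = ∏ j ∈ Icc (0:ℤ) ((N:ℤ) - 1), dd N h c0 j s :=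
        Finset.prod_congr rfl fun j hj => by
          have hj' := Finset.mem_Icc.mp hj
          exact cc_base N h c0 hN j s hj'.1 (by omega) hs hs2
      rw [e]
      exact dd_col N h c0 hc0diag hc0anti hN hd0 s hs (by omega)
    · intro b
      have e : ∏ j ∈ Icc (0:ℤ) ((N:ℤ) - 1), cc N h c0 j (b + N)
          = (∏ j ∈ Icc (0:ℤ) ((N:ℤ) - 1), cc N h c0 j b) *
            (h (0, b + N) * (h (0, b))⁻¹) := by
        have e1 : ∏ j ∈ Icc (0:ℤ) ((N:ℤ) - 1), cc N h c0 j (b + N)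
            = ∏ j ∈ Icc (0:ℤ) ((N:ℤ) - 1), (cc N h c0 j b * (h (b, j) * (h (b + 1, j))⁻¹)) :=
          Finset.prod_congr rfl fun j _ => cc_P2 N h c0 hN hla j b
        have e2 : lam h N b 0 = ∏ j ∈ Icc (0:ℤ) ((N:ℤ) - 1), h (b, j) := by
          rw [lam_eq_Icc, show (0:ℤ) + (N:ℤ) - 1 = (N:ℤ) - 1 by ring]
        have e3 : lam h N (b + 1) 0 = ∏ j ∈ Icc (0:ℤ) ((N:ℤ) - 1), h (b + 1, j) := by
          rw [lam_eq_Icc, show (0:ℤ) + (N:ℤ) - 1 = (N:ℤ) - 1 by ring]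
        have e4 := seed_ratio h N hla b
        rw [e2, e3] at e4
        rw [e1, Finset.prod_mul_distrib, Finset.prod_mul_distrib, Finset.prod_inv_distrib, ← e4]
      have e2 : h (0, b + N) = h (0, b) * (h (0, b + N) * (h (0, b))⁻¹) := by
        rw [← Units.val_inj]; push_cast; field_simp; try ring
      exact shift_iff e e2
  have hprod : ∀ a b : ℤ, ∏ j ∈ Icc a (a + (N:ℤ) - 1), cc N h c0 j b = h (a, b) := by
    intro a b
    revert a
    apply periodic_ind 1 one_pos
      (P := fun a => ∏ j ∈ Icc a (a + (N:ℤ) - 1), cc N h c0 j b = h (a, b))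
    · intro r hr hr2
      have : r = 0 := by omega
      subst this
      rw [show (0:ℤ) + (N:ℤ) - 1 = (N:ℤ) - 1 by ring]
      exact S0 b
    · intro a
      have split1 : Icc a (a + (N:ℤ) - 1) = insert a (Icc (a + 1) (a + (N:ℤ) - 1)) := by
        ext x; simp; omega
      have split2 : Icc (a + 1) (a + 1 + (N:ℤ) - 1) =
          insert (a + (N:ℤ)) (Icc (a + 1) (a + (N:ℤ) - 1)) := by
        ext x; simp; omega
      have nm1 : a ∉ Icc (a + 1) (a + (N:ℤ) - 1) := by simp
      have nm2 : a + (N:ℤ) ∉ Icc (a + 1) (a + (N:ℤ) - 1) := by simp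
      have e : ∏ j ∈ Icc (a + 1) (a + 1 + (N:ℤ) - 1), cc N h c0 j b
          = (∏ j ∈ Icc a (a + (N:ℤ) - 1), cc N h c0 j b) *
            (h (a + 1, b) * (h (a, b))⁻¹) := by
        rw [split1, split2, Finset.prod_insert nm1, Finset.prod_insert nm2,
          cc_P1 N h c0 hN a b]
        rw [← Units.val_inj]; push_cast; field_simp; try ring
      have e2 : h (a + 1, b) = h (a, b) * (h (a + 1, b) * (h (a, b))⁻¹) := by
        rw [← Units.val_inj]; push_cast; field_simp; try ring
      exact shift_iff e e2
  exact ⟨fun p => cc N h c0 p.1 p.2, hprod, hdiagc, hantic, hagree⟩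
end

section
/- Let k be a field, let N be a positive integer, and let h : ℤ × ℤ → kˣ be a family of nonzero elements of k. Define λ_{a,b} := ∏_{j=b}^{b+N-1} h_{a,j} for a, b ∈ ℤ, and assume λ_{a,b} · λ_{b,a} = 1 for all a, b ∈ ℤ. Define φ_{a,b} := h_{a+1,b} · h_{a,b}⁻¹ and ψ_{a,b} := h_{b,a} · h_{b+1,a}⁻¹ for a, b ∈ ℤ. Then the cocycle identity φ_{a,b+N} · ψ_{a,b} = ψ_{a+N,b} · φ_{a,b} holds for all a, b ∈ ℤ. -/
/-- Let `k` be a field, `N` a positive integer, and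
`h : ℤ × ℤ → kˣ`.  Set `λ_{a,b} := ∏_{j=b}^{b+N-1} h_{a,j}` and assume
`λ_{a,b} λ_{b,a} = 1` for all `a, b ∈ ℤ`.  With
`φ_{a,b} := h_{a+1,b} h_{a,b}⁻¹` and `ψ_{a,b} := h_{b,a} h_{b+1,a}⁻¹`, the
cocycle identity `φ_{a,b+N} ψ_{a,b} = ψ_{a+N,b} φ_{a,b}` holds for all
`a, b ∈ ℤ`. -/
theorem stmt2 {k : Type*} [Field k] (N : ℕ) (hN : 0 < N) (h : ℤ × ℤ → kˣ)
    (hanti : ∀ a b : ℤ,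
      (∏ j ∈ Finset.Icc b (b + (N : ℤ) - 1), h (a, j)) *
      (∏ j ∈ Finset.Icc a (a + (N : ℤ) - 1), h (b, j)) = 1) :
    ∀ a b : ℤ,
      (h (a + 1, b + N) * (h (a, b + N))⁻¹) * (h (b, a) * (h (b + 1, a))⁻¹) =
      (h (b, a + N) * (h (b + 1, a + N))⁻¹) * (h (a + 1, b) * (h (a, b))⁻¹) := by
  intro a b
  set Λ : ℤ → ℤ → kˣ := fun a b => ∏ j ∈ Finset.Icc b (b + (N : ℤ) - 1), h (a, j) with hΛ
  have hNN : (1 : ℤ) ≤ (N : ℤ) := by exact_mod_cast hN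
  -- the shift identity: h (a, b+N) = h (a, b) * Λ a (b+1) * (Λ a b)⁻¹
  have key : ∀ a b : ℤ, h (a, b + N) = h (a, b) * Λ a (b + 1) * (Λ a b)⁻¹ := by
    intro a b
    have hmem : b ≤ b + (N : ℤ) := by omega
    have e1 : Finset.Icc b (b + (N : ℤ)) = insert b (Finset.Ioc b (b + (N : ℤ))) :=
      (Finset.Ioc_insert_left hmem).symm
    have e2 : Finset.Icc b (b + (N : ℤ)) = insert (b + (N : ℤ)) (Finset.Ico b (b + (N : ℤ))) :=
      (Finset.Ico_insert_right hmem).symm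
    have e3 : Finset.Ioc b (b + (N : ℤ)) = Finset.Icc (b + 1) (b + 1 + (N : ℤ) - 1) := by
      ext j; simp only [Finset.mem_Ioc, Finset.mem_Icc]; omega
    have e4 : Finset.Ico b (b + (N : ℤ)) = Finset.Icc b (b + (N : ℤ) - 1) := by
      ext j; simp only [Finset.mem_Ico, Finset.mem_Icc]; omega
    have c1 : h (a, b) * Λ a (b + 1) = h (a, b + N) * Λ a b := by
      have p1 : ∏ j ∈ Finset.Icc b (b + (N : ℤ)), h (a, j) = h (a, b) * Λ a (b + 1) := by
        rw [e1, Finset.prod_insert Finset.left_notMem_Ioc, e3]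
      have p2 : ∏ j ∈ Finset.Icc b (b + (N : ℤ)), h (a, j) = h (a, b + N) * Λ a b := by
        rw [e2, Finset.prod_insert Finset.right_notMem_Ico, e4]
      rw [← p1, p2]
    rw [eq_mul_inv_iff_mul_eq]
    exact c1.symm
  have hinv : ∀ a b : ℤ, Λ b a = (Λ a b)⁻¹ := fun a b =>
    eq_inv_of_mul_eq_one_left (by rw [mul_comm]; exact hanti a b)
  rw [key (a+1) b, key a b, key b a, key (b+1) a, hinv a (b+1), hinv a b,
    hinv (a+1) (b+1) , hinv (a+1) b]
  generalize h (a+1, b) = A at *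
  generalize h (a, b) = B at *
  generalize h (b, a) = C at *
  generalize h (b+1, a) = D at *
  generalize Λ (a+1) (b+1) = P at *
  generalize Λ (a+1) b = Q at *
  generalize Λ a (b+1) = R at *
  generalize Λ a b = S at *
  clear * -
  rw [show ∀ x y : kˣ, x = y ↔ (x : k) = y from fun x y => Units.ext_iff]
  push_cast
  field_simp
end

section
/- Let k be a field. Let φ : ℤ × ℤ → k[[v]] be a family of formal power series in one variable over k, and for a, b ∈ ℤ let c_{a,b} ∈ k denote the constant coefficient of φ_{a,b}. Assume that each c_{a,b} is nonzero, that φ_{a,a} = 1 for all a ∈ ℤ, and that c_{a,b} · c_{b,a} = 1 for all a, b ∈ ℤ. Define C_{a,b}(u,v) := φ_{a,b}(v) · φ_{b,a}(u)⁻¹ · c_{b,a} in k[[u,v]], where φ_{a,b}(v) and φ_{b,a}(u) denote the images of φ_{a,b} and φ_{b,a} under the k-algebra homomorphisms k[[v]] → k[[u,v]] sending the variable to v and to u respectively, and where φ_{b,a}(u) is invertible in k[[u,v]] because its constant coefficient c_{b,a} is nonzero. Then: (i) C_{a,a}(u,v) = 1 for all a ∈ ℤ; (ii) C_{a,b}(u,v)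 · C_{b,a}(v,u) = 1 for all a, b ∈ ℤ, where C_{b,a}(v,u) denotes the image of C_{b,a} under the k-algebra automorphism of k[[u,v]] swapping the two variables; and (iii) the image of C_{a,b} under the k-algebra homomorphism k[[u,v]] → k[[z]] sending u ↦ 0 and v ↦ z equals φ_{a,b}(z), for all a, b ∈ ℤ. -/
open Finset

/-- The underlying function of the `k`-algebra automorphism of `k[[u,v]]`
(realized as `MvPowerSeries (Fin 2) k`, with `u` the variable of index `0`
and `v` the variable of index `1`) that swaps the two variables `u` and `v`:
the coefficient of the image at a monomial is the coefficient of the original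
series at the monomial with the two exponents exchanged. -/
noncomputable def swapVars {k : Type*} [Semiring k] (f : MvPowerSeries (Fin 2) k) :
    MvPowerSeries (Fin 2) k :=
  fun d => MvPowerSeries.coeff (Finsupp.equivMapDomain (Equiv.swap (0 : Fin 2) 1) d) f

/-- The underlying function of the `k`-algebra homomorphism
`k[[u,v]] → k[[z]]` sending `u ↦ 0` and `v ↦ z`. -/
noncomputable def evalUZeroVZ {k : Type*} [Semiring k] (f : MvPowerSeries (Fin 2) k) :
    PowerSeries k :=
  PowerSeries.mk fun n => MvPowerSeries.coeff (Finsupp.single (1 : Fin 2) n) f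

/-- The underlying function of the `k`-algebra homomorphism
`k[[X]] → k[[u,v]]` sending the variable `X` to the variable of index `i`
(so `i = 0` gives `X ↦ u` and `i = 1` gives `X ↦ v`): the coefficient of the
image at a monomial `d` is the coefficient of the original series at `d i`
if `d` is supported at `i`, and `0` otherwise. -/
noncomputable def psToMv {k : Type*} [Semiring k] (i : Fin 2) (f : PowerSeries k) :
    MvPowerSeries (Fin 2) k :=
  fun d =>
    if d = Finsupp.single i (d i) then PowerSeries.coeff (d i) f else 0

/-- The family `C_{a,b}(u,v) := φ_{a,b}(v) · φ_{b,a}(u)⁻¹ · c_{b,a}` of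
elements of `k[[u,v]]`, where `c_{b,a}` denotes the constant coefficient of
`φ_{b,a}` and the inverse is the power-series inverse over the field `k`
(which is the genuine inverse whenever the constant coefficient `c_{b,a}`
is nonzero). -/
noncomputable def Cfam {k : Type*} [Field k] (φ : ℤ × ℤ → PowerSeries k) (a b : ℤ) :
    MvPowerSeries (Fin 2) k :=
  psToMv 1 (φ (a, b)) * (psToMv 0 (φ (b, a)))⁻¹ *
    MvPowerSeries.C (PowerSeries.constantCoeff (φ (b, a)))

section Aux

variable {k : Type*}

lemma coeff_psToMv [Semiring k] (i : Fin 2) (f : PowerSeries k) (d : Fin 2 →₀ ℕ) :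
    MvPowerSeries.coeff d (psToMv i f) =
      if d = Finsupp.single i (d i) then PowerSeries.coeff (d i) f else 0 := rfl

lemma coeff_swapVars [Semiring k] (f : MvPowerSeries (Fin 2) k) (d : Fin 2 →₀ ℕ) :
    MvPowerSeries.coeff d (swapVars f) =
      MvPowerSeries.coeff (Finsupp.equivMapDomain (Equiv.swap (0 : Fin 2) 1) d) f := rfl

lemma coeff_evalUZeroVZ [Semiring k] (f : MvPowerSeries (Fin 2) k) (n : ℕ) :
    PowerSeries.coeff n (evalUZeroVZ f) =
      MvPowerSeries.coeff (Finsupp.single (1 : Fin 2) n) f := by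
  simp [evalUZeroVZ]

lemma eq_single_of_other_zero (i : Fin 2) (d : Fin 2 →₀ ℕ)
    (h : ∀ j, j ≠ i → d j = 0) : d = Finsupp.single i (d i) := by
  ext x
  rcases eq_or_ne x i with rfl | hx
  · simp
  · rw [h x hx, Finsupp.single_apply, if_neg (fun h' => hx h'.symm)]

lemma fin2_eq_of_ne (x i j : Fin 2) (hx : x ≠ i) (hj : j ≠ i) : x = j := by
  have h1 := x.isLt; have h2 := i.isLt; have h3 := j.isLt
  have hxv : x.val ≠ i.val := fun h => hx (Fin.ext h)
  have hjv : j.val ≠ i.val := fun h => hj (Fin.ext h)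
  exact Fin.ext (by omega)

lemma eq_single_iff (i j : Fin 2) (hij : j ≠ i) (d : Fin 2 →₀ ℕ) :
    d = Finsupp.single i (d i) ↔ d j = 0 := by
  constructor
  · intro h
    conv_lhs => rw [h]
    rw [Finsupp.single_apply, if_neg (fun h' => hij h'.symm)]
  · intro h
    refine eq_single_of_other_zero i d fun x hx => ?_
    obtain rfl := fin2_eq_of_ne x i j hx hij
    exact h

lemma psToMv_one [Semiring k] (i : Fin 2) : psToMv i (1 : PowerSeries k) = 1 := by
  ext d
  rw [coeff_psToMv, MvPowerSeries.coeff_one]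
  rcases eq_or_ne d 0 with rfl | hd
  · simp
  · rw [if_neg hd]
    split_ifs with h
    · rw [PowerSeries.coeff_one, if_neg]
      intro hdi
      exact hd (by rw [h, hdi, Finsupp.single_zero])
    · rfl

lemma parts_single (i : Fin 2) {d p q : Fin 2 →₀ ℕ}
    (h : d = Finsupp.single i (d i)) (hp : p + q = d) :
    p = Finsupp.single i (p i) ∧ q = Finsupp.single i (q i) := by
  have key : ∀ j, j ≠ i → p j + q j = 0 := by
    intro j hj
    have hpj : p j + q j = d j := by
      have := congrArg (fun r : Fin 2 →₀ ℕ => r j) hp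
      simpa using this
    rw [hpj, h, Finsupp.single_apply, if_neg (fun h' => hj h'.symm)]
  constructor
  · exact eq_single_of_other_zero i _ fun j hj => by have := key j hj; omega
  · exact eq_single_of_other_zero i _ fun j hj => by have := key j hj; omega

lemma psToMv_mul [Semiring k] (i : Fin 2) (f g : PowerSeries k) :
    psToMv i (f * g) = psToMv i f * psToMv i g := by
  ext d
  rw [MvPowerSeries.coeff_mul, coeff_psToMv]
  split_ifs with h
  · rw [PowerSeries.coeff_mul]
    symm
    refine Finset.sum_nbij' (fun p => (p.1 i, p.2 i))
      (fun p => (Finsupp.single i p.1, Finsupp.single i p.2)) ?_ ?_ ?_ ?_ ?_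
    · intro p hp
      rw [Finset.HasAntidiagonal.mem_antidiagonal] at hp ⊢
      have := congrArg (fun q : Fin 2 →₀ ℕ => q i) hp
      simpa using this
    · intro p hp
      rw [Finset.HasAntidiagonal.mem_antidiagonal] at hp ⊢
      show Finsupp.single i p.1 + Finsupp.single i p.2 = d
      rw [h, ← hp, Finsupp.single_add]
    · intro p hp
      rw [Finset.HasAntidiagonal.mem_antidiagonal] at hp
      obtain ⟨h1, h2⟩ := parts_single i h hp
      ext <;> simp [← h1, ← h2]
    · intro p _; simp
    · intro p hp
      rw [Finset.HasAntidiagonal.mem_antidiagonal] at hp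
      obtain ⟨h1, h2⟩ := parts_single i h hp
      rw [coeff_psToMv, coeff_psToMv, if_pos h1, if_pos h2]
  · symm
    refine Finset.sum_eq_zero fun p hp => ?_
    rw [Finset.HasAntidiagonal.mem_antidiagonal] at hp
    rw [coeff_psToMv, coeff_psToMv]
    by_contra hc
    have h1 : p.1 = Finsupp.single i (p.1 i) := by
      by_contra h1; rw [if_neg h1, zero_mul] at hc; exact hc rfl
    have h2 : p.2 = Finsupp.single i (p.2 i) := by
      by_contra h2; rw [if_neg h2, mul_zero] at hc; exact hc rfl
    apply h
    have hval : p.1 i + p.2 i = d i := by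
      rw [← hp]; simp
    rw [← hval, Finsupp.single_add, ← h1, ← h2]
    exact hp.symm

lemma constantCoeff_psToMv [Semiring k] (i : Fin 2) (f : PowerSeries k) :
    MvPowerSeries.constantCoeff (psToMv i f) = PowerSeries.constantCoeff f := by
  have : MvPowerSeries.constantCoeff (psToMv i f) =
      MvPowerSeries.coeff 0 (psToMv i f) := rfl
  rw [this, coeff_psToMv]
  simp

lemma equivMapDomain_swap_add (p q : Fin 2 →₀ ℕ) :
    Finsupp.equivMapDomain (Equiv.swap (0 : Fin 2) 1) (p + q) =
      Finsupp.equivMapDomain (Equiv.swap (0 : Fin 2) 1) p +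
      Finsupp.equivMapDomain (Equiv.swap (0 : Fin 2) 1) q := by
  ext x; simp [Finsupp.equivMapDomain_apply]

lemma equivMapDomain_swap_swap (d : Fin 2 →₀ ℕ) :
    Finsupp.equivMapDomain (Equiv.swap (0 : Fin 2) 1)
      (Finsupp.equivMapDomain (Equiv.swap (0 : Fin 2) 1) d) = d := by
  ext x; simp [Finsupp.equivMapDomain_apply]

lemma swapVars_mul [Semiring k] (f g : MvPowerSeries (Fin 2) k) :
    swapVars (f * g) = swapVars f * swapVars g := by
  ext d
  rw [coeff_swapVars, MvPowerSeries.coeff_mul, MvPowerSeries.coeff_mul]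
  refine Finset.sum_nbij'
    (fun p => (Finsupp.equivMapDomain (Equiv.swap (0 : Fin 2) 1) p.1,
               Finsupp.equivMapDomain (Equiv.swap (0 : Fin 2) 1) p.2))
    (fun p => (Finsupp.equivMapDomain (Equiv.swap (0 : Fin 2) 1) p.1,
               Finsupp.equivMapDomain (Equiv.swap (0 : Fin 2) 1) p.2))
    ?_ ?_ ?_ ?_ ?_
  · intro p hp
    rw [Finset.HasAntidiagonal.mem_antidiagonal] at hp ⊢
    rw [← equivMapDomain_swap_add, hp, equivMapDomain_swap_swap]
  · intro p hp
    rw [Finset.HasAntidiagonal.mem_antidiagonal] at hp ⊢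
    rw [← equivMapDomain_swap_add, hp]
  · intro p _; ext x <;> simp [equivMapDomain_swap_swap]
  · intro p _; ext x <;> simp [equivMapDomain_swap_swap]
  · intro p _
    rw [coeff_swapVars, coeff_swapVars, equivMapDomain_swap_swap, equivMapDomain_swap_swap]

lemma swapVars_C [Semiring k] (r : k) :
    swapVars (MvPowerSeries.C r) = MvPowerSeries.C r := by
  ext d
  rw [coeff_swapVars, MvPowerSeries.coeff_C, MvPowerSeries.coeff_C]
  have hz : Finsupp.equivMapDomain (Equiv.swap (0 : Fin 2) 1) d = 0 ↔ d = 0 := by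
    constructor
    · intro h
      have := congrArg (Finsupp.equivMapDomain (Equiv.swap (0 : Fin 2) 1)) h
      rwa [equivMapDomain_swap_swap, Finsupp.equivMapDomain_zero] at this
    · intro h; rw [h, Finsupp.equivMapDomain_zero]
  simp only [hz]

lemma swapVars_one [Semiring k] : swapVars (1 : MvPowerSeries (Fin 2) k) = 1 := by
  rw [show (1 : MvPowerSeries (Fin 2) k) = MvPowerSeries.C 1 from (map_one _).symm]
  exact swapVars_C 1

lemma swapVars_psToMv [Semiring k] (i : Fin 2) (f : PowerSeries k) :
    swapVars (psToMv i f) = psToMv (Equiv.swap (0 : Fin 2) 1 i) f := by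
  ext d
  set e := Equiv.swap (0 : Fin 2) 1 with he
  have hee : ∀ x, e (e x) = x := fun x => Equiv.swap_apply_self 0 1 x
  have happ : ∀ x, (Finsupp.equivMapDomain e d) x = d (e x) := fun x => by
    rw [Finsupp.equivMapDomain_apply, he, Equiv.symm_swap]
  have hne1 : e i ≠ i := by fin_cases i <;> simp [he]
  rw [coeff_swapVars, coeff_psToMv, coeff_psToMv, happ i]
  have hl : Finsupp.equivMapDomain e d = Finsupp.single i (d (e i)) ↔ d i = 0 := by
    rw [← happ i, eq_single_iff i (e i) hne1, happ (e i), hee]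
  have hr : d = Finsupp.single (e i) (d (e i)) ↔ d i = 0 :=
    eq_single_iff (e i) i (fun h => hne1 h.symm) d
  by_cases hd : d i = 0
  · rw [if_pos (hl.mpr hd), if_pos (hr.mpr hd)]
  · rw [if_neg (fun h => hd (hl.mp h)), if_neg (fun h => hd (hr.mp h))]

lemma constantCoeff_swapVars [Semiring k] (f : MvPowerSeries (Fin 2) k) :
    MvPowerSeries.constantCoeff (swapVars f) =
      MvPowerSeries.constantCoeff f := by
  have : MvPowerSeries.constantCoeff (swapVars f) =
      MvPowerSeries.coeff 0 (swapVars f) := rfl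
  rw [this, coeff_swapVars, Finsupp.equivMapDomain_zero]
  rfl

lemma swapVars_inv [Field k] (f : MvPowerSeries (Fin 2) k)
    (hf : MvPowerSeries.constantCoeff f ≠ 0) :
    swapVars f⁻¹ = (swapVars f)⁻¹ := by
  have hsf : MvPowerSeries.constantCoeff (swapVars f) ≠ 0 := by
    rwa [constantCoeff_swapVars]
  rw [MvPowerSeries.eq_inv_iff_mul_eq_one hsf, ← swapVars_mul,
    MvPowerSeries.inv_mul_cancel f hf, swapVars_one]

lemma evalUZeroVZ_mul [Semiring k] (f g : MvPowerSeries (Fin 2) k) :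
    evalUZeroVZ (f * g) = evalUZeroVZ f * evalUZeroVZ g := by
  ext n
  rw [coeff_evalUZeroVZ, MvPowerSeries.coeff_mul, PowerSeries.coeff_mul]
  refine Finset.sum_nbij' (fun p => (p.1 1, p.2 1))
    (fun p => (Finsupp.single (1 : Fin 2) p.1, Finsupp.single (1 : Fin 2) p.2)) ?_ ?_ ?_ ?_ ?_
  · intro p hp
    rw [Finset.HasAntidiagonal.mem_antidiagonal] at hp ⊢
    have := congrArg (fun q : Fin 2 →₀ ℕ => q 1) hp
    simpa using this
  · intro p hp
    rw [Finset.HasAntidiagonal.mem_antidiagonal] at hp ⊢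
    rw [← hp, Finsupp.single_add]
  · intro p hp
    rw [Finset.HasAntidiagonal.mem_antidiagonal] at hp
    have h1 : p.1 = Finsupp.single (1 : Fin 2) (p.1 1) := by
      refine eq_single_of_other_zero 1 _ fun j hj => ?_
      have := congrArg (fun q : Fin 2 →₀ ℕ => q j) hp
      simp only [Finsupp.add_apply] at this
      have h0 : p.1 j + p.2 j = 0 := by
        rw [this, Finsupp.single_apply, if_neg (fun h' => hj h'.symm)]
      omega
    have h2 : p.2 = Finsupp.single (1 : Fin 2) (p.2 1) := by
      refine eq_single_of_other_zero 1 _ fun j hj => ?_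
      have := congrArg (fun q : Fin 2 →₀ ℕ => q j) hp
      simp only [Finsupp.add_apply] at this
      have h0 : p.1 j + p.2 j = 0 := by
        rw [this, Finsupp.single_apply, if_neg (fun h' => hj h'.symm)]
      omega
    ext <;> simp [← h1, ← h2]
  · intro p _; simp
  · intro p hp
    rw [Finset.HasAntidiagonal.mem_antidiagonal] at hp
    have h1 : p.1 = Finsupp.single (1 : Fin 2) (p.1 1) := by
      refine eq_single_of_other_zero 1 _ fun j hj => ?_
      have := congrArg (fun q : Fin 2 →₀ ℕ => q j) hp
      simp only [Finsupp.add_apply] at this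
      have h0 : p.1 j + p.2 j = 0 := by
        rw [this, Finsupp.single_apply, if_neg (fun h' => hj h'.symm)]
      omega
    have h2 : p.2 = Finsupp.single (1 : Fin 2) (p.2 1) := by
      refine eq_single_of_other_zero 1 _ fun j hj => ?_
      have := congrArg (fun q : Fin 2 →₀ ℕ => q j) hp
      simp only [Finsupp.add_apply] at this
      have h0 : p.1 j + p.2 j = 0 := by
        rw [this, Finsupp.single_apply, if_neg (fun h' => hj h'.symm)]
      omega
    rw [coeff_evalUZeroVZ, coeff_evalUZeroVZ]
    rw [← h1, ← h2]

lemma evalUZeroVZ_one [Semiring k] : evalUZeroVZ (1 : MvPowerSeries (Fin 2) k) = 1 := by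
  ext n
  rw [coeff_evalUZeroVZ, MvPowerSeries.coeff_one, PowerSeries.coeff_one]
  congr 1
  simp [Finsupp.single_eq_zero, eq_iff_iff]

lemma evalUZeroVZ_C [Semiring k] (r : k) :
    evalUZeroVZ (MvPowerSeries.C r) = PowerSeries.C r := by
  ext n
  rw [coeff_evalUZeroVZ, MvPowerSeries.coeff_C, PowerSeries.coeff_C]
  congr 1
  simp [Finsupp.single_eq_zero, eq_iff_iff]

lemma evalUZeroVZ_psToMv1 [Semiring k] (f : PowerSeries k) :
    evalUZeroVZ (psToMv 1 f) = f := by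
  ext n
  rw [coeff_evalUZeroVZ, coeff_psToMv]
  simp

lemma evalUZeroVZ_psToMv0 [Semiring k] (f : PowerSeries k) :
    evalUZeroVZ (psToMv 0 f) = PowerSeries.C (PowerSeries.constantCoeff f) := by
  ext n
  rw [coeff_evalUZeroVZ, coeff_psToMv, PowerSeries.coeff_C]
  rcases eq_or_ne n 0 with rfl | hn
  · simp [PowerSeries.coeff_zero_eq_constantCoeff]
  · rw [if_neg hn, if_neg]
    intro h
    have := congrArg (fun q : Fin 2 →₀ ℕ => q (1 : Fin 2)) h
    simp at this
    exact hn this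

end Aux

/-- Let `k` be a field and `φ : ℤ × ℤ → k[[v]]` a family of
power series whose constant coefficients `c_{a,b}` are all nonzero, with
`φ_{a,a} = 1` and `c_{a,b} c_{b,a} = 1` for all `a, b ∈ ℤ`.  Then the family
`C_{a,b}(u,v) := φ_{a,b}(v) · φ_{b,a}(u)⁻¹ · c_{b,a}` in `k[[u,v]]` satisfies
`C_{a,a}(u,v) = 1`, `C_{a,b}(u,v) · C_{b,a}(v,u) = 1` (the second factor being
the image of `C_{b,a}` under the swap of the two variables), and the image of
`C_{a,b}` under `u ↦ 0`, `v ↦ z` equals `φ_{a,b}(z)`. -/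

theorem stmt5 {k : Type*} [Field k] (φ : ℤ × ℤ → PowerSeries k)
    (hne : ∀ a b : ℤ, PowerSeries.constantCoeff (φ (a, b)) ≠ 0)
    (hdiag : ∀ a : ℤ, φ (a, a) = 1)
    (hanti : ∀ a b : ℤ,
      PowerSeries.constantCoeff (φ (a, b)) *
      PowerSeries.constantCoeff (φ (b, a)) = 1) :
    (∀ a : ℤ, Cfam φ a a = 1) ∧
    (∀ a b : ℤ, Cfam φ a b * swapVars (Cfam φ b a) = 1) ∧
    (∀ a b : ℤ, evalUZeroVZ (Cfam φ a b) = φ (a, b)) := by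
  have hone : (1 : MvPowerSeries (Fin 2) k)⁻¹ = 1 := by
    rw [show (1 : MvPowerSeries (Fin 2) k) = MvPowerSeries.C 1 from (map_one _).symm,
      MvPowerSeries.C_inv, inv_one]
  refine ⟨fun a => ?_, fun a b => ?_, fun a b => ?_⟩
  · rw [Cfam, hdiag a, psToMv_one, psToMv_one, hone, one_mul, one_mul, map_one, map_one]
  · have hca : MvPowerSeries.constantCoeff (psToMv 1 (φ (a, b))) ≠ 0 := by
      rw [constantCoeff_psToMv]; exact hne a b
    have hcb : MvPowerSeries.constantCoeff (psToMv 0 (φ (b, a))) ≠ 0 := by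
      rw [constantCoeff_psToMv]; exact hne b a
    have hswap : swapVars (Cfam φ b a) =
        psToMv 0 (φ (b, a)) * (psToMv 1 (φ (a, b)))⁻¹ *
          MvPowerSeries.C (PowerSeries.constantCoeff (φ (a, b))) := by
      rw [Cfam, swapVars_mul, swapVars_mul, swapVars_C, swapVars_psToMv,
        swapVars_inv _ (by rw [constantCoeff_psToMv]; exact hne a b), swapVars_psToMv]
      norm_num
    rw [Cfam, hswap]
    have key : psToMv 1 (φ (a, b)) * (psToMv 0 (φ (b, a)))⁻¹ *
        MvPowerSeries.C (PowerSeries.constantCoeff (φ (b, a))) *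
        (psToMv 0 (φ (b, a)) * (psToMv 1 (φ (a, b)))⁻¹ *
          MvPowerSeries.C (PowerSeries.constantCoeff (φ (a, b)))) =
        (psToMv 1 (φ (a, b)) * (psToMv 1 (φ (a, b)))⁻¹) *
        ((psToMv 0 (φ (b, a)))⁻¹ * psToMv 0 (φ (b, a))) *
        (MvPowerSeries.C (PowerSeries.constantCoeff (φ (b, a))) *
          MvPowerSeries.C (PowerSeries.constantCoeff (φ (a, b)))) := by
      ring
    rw [key, MvPowerSeries.mul_inv_cancel _ hca, MvPowerSeries.inv_mul_cancel _ hcb,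
      ← map_mul, mul_comm (PowerSeries.constantCoeff (φ (b, a))), hanti a b, map_one]
    simp
  · have hcb : MvPowerSeries.constantCoeff (psToMv 0 (φ (b, a))) ≠ 0 := by
      rw [constantCoeff_psToMv]; exact hne b a
    have hmul : psToMv 0 (φ (b, a)) * (psToMv 0 (φ (b, a)))⁻¹ = 1 :=
      MvPowerSeries.mul_inv_cancel _ hcb
    have heval : PowerSeries.C (PowerSeries.constantCoeff (φ (b, a))) *
        evalUZeroVZ (psToMv 0 (φ (b, a)))⁻¹ = 1 := by
      rw [← evalUZeroVZ_psToMv0, ← evalUZeroVZ_mul, hmul, evalUZeroVZ_one]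
    rw [Cfam, evalUZeroVZ_mul, evalUZeroVZ_mul, evalUZeroVZ_psToMv1, evalUZeroVZ_C]
    rw [mul_assoc, mul_comm (evalUZeroVZ (psToMv 0 (φ (b, a)))⁻¹), heval, mul_one]
end
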